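/- arXiv:2307.12694 — 5 statements merged into one kernel-verified Lean document; each statement's English description precedes it below -/
import Mathlib

section
/- Let I ⊆ ℝ be measurable with finite positive measure, f : I → ℝ^ℓ square-integrable with F = ∫_I f fᵀ dτ positive definite, X ∈ ℝ^{n×n} symmetric positive semidefinite, and x : I → ℝ^n square-integrable. Then ∫_I x(τ)ᵀ X x(τ) dτ ≥ vᵀ (F^{-1} ⊗ X) v, where v = ∫_I (f(τ) ⊗ I_n) x(τ) dτ ∈ ℝ^{ℓ n}. -/
open Matrix MeasureTheory
open scoped Kronecker

lemma mulInt {μ : Measure ℝ} {a b : ℝ → ℝ} (ha : MemLp a 2 μ) (hb : MemLp b 2 μ) :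
    Integrable (fun τ => a τ * b τ) μ := by
  have h := MeasureTheory.MemLp.smul (r := 1) (f := b) (φ := a) hb ha
    (hpqr := ⟨by simp [ENNReal.inv_two_add_inv_two]⟩)
  exact memLp_one_iff_integrable.mp h

lemma trace2 {a b : Type*} [Fintype a] [Fintype b] (A B : Matrix a b ℝ) :
    Matrix.trace (A * Bᵀ) = ∑ i, ∑ j, A i j * B i j := by
  simp [Matrix.trace, Matrix.diag, Matrix.mul_apply]

lemma key_expand {a b : Type*} [Fintype a] [Fintype b] (M : Matrix a b ℝ)
    (u : a → ℝ) (w : b → ℝ) :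
    u ⬝ᵥ M.mulVec w = ∑ i, ∑ j, M i j * (u i * w j) := by
  simp only [dotProduct, Matrix.mulVec, Finset.mul_sum]
  exact Finset.sum_congr rfl fun i _ => Finset.sum_congr rfl fun j _ => by ring

lemma dp_trans {a b c : Type*} [Fintype a] [Fintype b] [Fintype c]
    (C : Matrix a b ℝ) (M : Matrix b c ℝ) (u : a → ℝ) (w : c → ℝ) :
    (Cᵀ.mulVec u) ⬝ᵥ (M.mulVec w) = u ⬝ᵥ ((C * M).mulVec w) := by
  rw [← Matrix.mulVec_mulVec, Matrix.dotProduct_mulVec u C, ← Matrix.mulVec_transpose]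

lemma keyInt {a b : Type*} [Fintype a] [Fintype b] {μ : Measure ℝ} (M : Matrix a b ℝ)
    (u : ℝ → a → ℝ) (w : ℝ → b → ℝ)
    (hint : ∀ i j, Integrable (fun τ => u τ i * w τ j) μ) :
    Integrable (fun τ => (u τ) ⬝ᵥ M.mulVec (w τ)) μ := by
  simp only [key_expand]
  exact integrable_finset_sum _ fun i _ => integrable_finset_sum _
    fun j _ => (hint i j).const_mul _

lemma key {a b : Type*} [Fintype a] [Fintype b] {μ : Measure ℝ} (M : Matrix a b ℝ)
    (u : ℝ → a → ℝ) (w : ℝ → b → ℝ)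
    (hint : ∀ i j, Integrable (fun τ => u τ i * w τ j) μ) :
    (∫ τ, (u τ) ⬝ᵥ M.mulVec (w τ) ∂μ) = ∑ i, ∑ j, M i j * ∫ τ, u τ i * w τ j ∂μ := by
  simp only [key_expand]
  rw [integral_finset_sum _ (fun i _ => integrable_finset_sum _
    (fun j _ => (hint i j).const_mul (M i j)))]
  refine Finset.sum_congr rfl fun i _ => ?_
  rw [integral_finset_sum _ (fun j _ => (hint i j).const_mul (M i j))]
  exact Finset.sum_congr rfl fun j _ => integral_const_mul _ _

lemma kron_trace (ℓ n : ℕ) (G : Matrix (Fin ℓ) (Fin ℓ) ℝ) (hs : ∀ i j, G i j = G j i)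
    (X : Matrix (Fin n) (Fin n) ℝ) (v : Fin ℓ × Fin n → ℝ) :
    v ⬝ᵥ ((G ⊗ₖ X).mulVec v)
      = Matrix.trace (G * ((Matrix.of fun i k => v (i, k)) * X *
          (Matrix.of fun i k => v (i, k))ᵀ)) := by
  set T : Fin ℓ → Fin ℓ → ℝ := fun i j => ∑ k, ∑ l, X k l * (v (i, k) * v (j, l)) with hT
  rw [key_expand]
  simp only [Matrix.trace, Matrix.diag, Matrix.mul_apply, Matrix.transpose_apply,
    Matrix.of_apply, Fintype.sum_prod_type, Matrix.kroneckerMap_apply,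
    Finset.sum_mul, Finset.mul_sum]
  have hL : (∑ i : Fin ℓ, ∑ k : Fin n, ∑ j : Fin ℓ, ∑ l : Fin n,
      G i j * X k l * (v (i, k) * v (j, l))) = ∑ i, ∑ j, G i j * T i j := by
    refine Finset.sum_congr rfl fun i _ => ?_
    rw [Finset.sum_comm]
    refine Finset.sum_congr rfl fun j _ => ?_
    rw [hT, Finset.mul_sum]
    refine Finset.sum_congr rfl fun k _ => ?_
    rw [Finset.mul_sum]
    exact Finset.sum_congr rfl fun l _ => by ring
  have hR : (∑ i : Fin ℓ, ∑ j : Fin ℓ, ∑ l : Fin n, ∑ k : Fin n,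
      G i j * (v (j, k) * X k l * v (i, l))) = ∑ i, ∑ j, G i j * T j i := by
    refine Finset.sum_congr rfl fun i _ => Finset.sum_congr rfl fun j _ => ?_
    rw [Finset.sum_comm, hT, Finset.mul_sum]
    refine Finset.sum_congr rfl fun k _ => ?_
    rw [Finset.mul_sum]
    exact Finset.sum_congr rfl fun l _ => by ring
  rw [hL, hR]
  calc ∑ i, ∑ j, G i j * T i j
      = ∑ j, ∑ i, G i j * T i j := Finset.sum_comm
    _ = ∑ i, ∑ j, G i j * T j i :=
        Finset.sum_congr rfl fun a _ => Finset.sum_congr rfl fun b _ => by rw [hs]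


/-- Bessel-type integral inequality:
`∫_I xᵀ X x ≥ vᵀ (F⁻¹ ⊗ X) v` with `v = ∫_I (f ⊗ I_n) x`. -/
theorem stmt5 (ℓ n : ℕ) (I : Set ℝ) (hI : MeasurableSet I)
    (h0 : 0 < volume I) (hfin : volume I < ⊤)
    (f : ℝ → Fin ℓ → ℝ) (x : ℝ → Fin n → ℝ)
    (hf : ∀ i, MemLp (fun τ => f τ i) 2 (volume.restrict I))
    (hx : ∀ k, MemLp (fun τ => x τ k) 2 (volume.restrict I))
    (F : Matrix (Fin ℓ) (Fin ℓ) ℝ)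
    (hFdef : F = Matrix.of fun i j => ∫ τ in I, f τ i * f τ j)
    (hFpd : F.PosDef)
    (X : Matrix (Fin n) (Fin n) ℝ) (hX : X.PosSemidef)
    (v : Fin ℓ × Fin n → ℝ)
    (hv : v = fun p => ∫ τ in I, f τ p.1 * x τ p.2) :
    (∫ τ in I, (x τ) ⬝ᵥ (X.mulVec (x τ))) ≥ v ⬝ᵥ ((F⁻¹ ⊗ₖ X).mulVec v) := by
  classical
  have hXs : Xᵀ = X := by
    have := hX.1
    rwa [Matrix.IsHermitian, Matrix.conjTranspose_eq_transpose_of_trivial] at this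
  have hFs : Fᵀ = F := by
    rw [hFdef]; ext i j; simp [Matrix.transpose_apply, mul_comm]
  have hdet : IsUnit F.det := hFpd.det_pos.ne'.isUnit
  have hFinv2 : F⁻¹ * F = 1 := Matrix.nonsing_inv_mul F hdet
  have hFinvs : (F⁻¹)ᵀ = F⁻¹ := by rw [Matrix.transpose_nonsing_inv, hFs]
  have hFis : ∀ i j, F⁻¹ i j = F⁻¹ j i := by
    intro i j
    have h := congrFun (congrFun hFinvs i) j
    simpa [Matrix.transpose_apply] using h.symm
  set V : Matrix (Fin ℓ) (Fin n) ℝ := Matrix.of (fun i k => v (i, k)) with hVdef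
  set C : Matrix (Fin ℓ) (Fin n) ℝ := F⁻¹ * V with hCdef
  set B : ℝ := Matrix.trace (F⁻¹ * (V * X * Vᵀ)) with hBdef
  have hffInt : ∀ i j, Integrable (fun τ => f τ i * f τ j) (volume.restrict I) :=
    fun i j => mulInt (hf i) (hf j)
  have hfxInt : ∀ i k, Integrable (fun τ => f τ i * x τ k) (volume.restrict I) :=
    fun i k => mulInt (hf i) (hx k)
  have hxfInt : ∀ k i, Integrable (fun τ => x τ k * f τ i) (volume.restrict I) :=
    fun k i => mulInt (hx k) (hf i)
  have hxxInt : ∀ k l, Integrable (fun τ => x τ k * x τ l) (volume.restrict I) :=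
    fun k l => mulInt (hx k) (hx l)
  have hvint : ∀ i k, (∫ τ in I, f τ i * x τ k) = V i k := by
    intro i k; rw [hVdef, hv]; rfl
  have hvint' : ∀ k i, (∫ τ in I, x τ k * f τ i) = V i k := by
    intro k i; rw [← hvint i k]; simp_rw [mul_comm]
  have hFint : ∀ i j, (∫ τ in I, f τ i * f τ j) = F i j := by
    intro i j; rw [hFdef]; rfl
  set g : ℝ → Fin n → ℝ := fun τ => x τ - Cᵀ.mulVec (f τ) with hgdef
  have hpt : ∀ τ, g τ ⬝ᵥ X.mulVec (g τ)
      = (x τ) ⬝ᵥ X.mulVec (x τ) - (f τ) ⬝ᵥ ((C * X).mulVec (x τ))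
        - (x τ) ⬝ᵥ ((X * Cᵀ).mulVec (f τ))
        + (f τ) ⬝ᵥ ((C * X * Cᵀ).mulVec (f τ)) := by
    intro τ
    have h1 : (Cᵀ.mulVec (f τ)) ⬝ᵥ X.mulVec (x τ) = (f τ) ⬝ᵥ ((C * X).mulVec (x τ)) :=
      dp_trans C X (f τ) (x τ)
    have h2 : (x τ) ⬝ᵥ X.mulVec (Cᵀ.mulVec (f τ)) = (x τ) ⬝ᵥ ((X * Cᵀ).mulVec (f τ)) := by
      rw [Matrix.mulVec_mulVec]
    have h3 : (Cᵀ.mulVec (f τ)) ⬝ᵥ X.mulVec (Cᵀ.mulVec (f τ))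
        = (f τ) ⬝ᵥ ((C * X * Cᵀ).mulVec (f τ)) := by
      rw [Matrix.mulVec_mulVec, dp_trans C (X * Cᵀ), ← Matrix.mul_assoc]
    rw [hgdef]
    simp only [Matrix.mulVec_sub, sub_dotProduct, dotProduct_sub]
    rw [h1, h2, h3]; ring
  have hq0 : 0 ≤ ∫ τ in I, g τ ⬝ᵥ X.mulVec (g τ) := by
    refine integral_nonneg fun τ => ?_
    have := hX.dotProduct_mulVec_nonneg (g τ)
    simpa using this
  have hint1 : Integrable (fun τ => (x τ) ⬝ᵥ X.mulVec (x τ)) (volume.restrict I) :=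
    keyInt X x x hxxInt
  have hint2 : Integrable (fun τ => (f τ) ⬝ᵥ ((C * X).mulVec (x τ))) (volume.restrict I) :=
    keyInt _ f x hfxInt
  have hint3 : Integrable (fun τ => (x τ) ⬝ᵥ ((X * Cᵀ).mulVec (f τ))) (volume.restrict I) :=
    keyInt _ x f hxfInt
  have hint4 : Integrable (fun τ => (f τ) ⬝ᵥ ((C * X * Cᵀ).mulVec (f τ))) (volume.restrict I) :=
    keyInt _ f f hffInt
  have h12 : Integrable (fun τ => (x τ) ⬝ᵥ X.mulVec (x τ)
      - (f τ) ⬝ᵥ ((C * X).mulVec (x τ))) (volume.restrict I) := hint1.sub hint2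
  have h123 : Integrable (fun τ => (x τ) ⬝ᵥ X.mulVec (x τ)
      - (f τ) ⬝ᵥ ((C * X).mulVec (x τ))
      - (x τ) ⬝ᵥ ((X * Cᵀ).mulVec (f τ))) (volume.restrict I) := h12.sub hint3
  have hsplit : (∫ τ in I, g τ ⬝ᵥ X.mulVec (g τ))
      = (∫ τ in I, (x τ) ⬝ᵥ X.mulVec (x τ))
        - (∫ τ in I, (f τ) ⬝ᵥ ((C * X).mulVec (x τ)))
        - (∫ τ in I, (x τ) ⬝ᵥ ((X * Cᵀ).mulVec (f τ)))
        + (∫ τ in I, (f τ) ⬝ᵥ ((C * X * Cᵀ).mulVec (f τ))) := by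
    rw [integral_congr_ae (Filter.Eventually.of_forall hpt),
      integral_add h123 hint4, integral_sub h12 hint3, integral_sub hint1 hint2]
  have e2 : (∫ τ in I, (f τ) ⬝ᵥ ((C * X).mulVec (x τ))) = Matrix.trace ((C * X) * Vᵀ) := by
    rw [key _ f x hfxInt, trace2]
    exact Finset.sum_congr rfl fun i _ => Finset.sum_congr rfl fun l _ => by
      rw [hvint i l]
  have e3 : (∫ τ in I, (x τ) ⬝ᵥ ((X * Cᵀ).mulVec (f τ))) = Matrix.trace ((X * Cᵀ) * V) := by
    rw [key _ x f hxfInt]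
    have h' : Matrix.trace ((X * Cᵀ) * V) = Matrix.trace ((X * Cᵀ) * (Vᵀ)ᵀ) := by
      rw [Matrix.transpose_transpose]
    rw [h', trace2]
    exact Finset.sum_congr rfl fun k _ => Finset.sum_congr rfl fun i _ => by
      rw [hvint' k i]; rfl
  have e4 : (∫ τ in I, (f τ) ⬝ᵥ ((C * X * Cᵀ).mulVec (f τ)))
      = Matrix.trace ((C * X * Cᵀ) * Fᵀ) := by
    rw [key _ f f hffInt, trace2]
    exact Finset.sum_congr rfl fun i _ => Finset.sum_congr rfl fun j _ => by
      rw [hFint i j]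
  have tB2 : Matrix.trace ((C * X) * Vᵀ) = B := by
    rw [hBdef, hCdef]; rw [← Matrix.mul_assoc, ← Matrix.mul_assoc]
  have tB3 : Matrix.trace ((X * Cᵀ) * V) = B := by
    rw [hCdef, Matrix.transpose_mul, hFinvs, hBdef, Matrix.trace_mul_comm]
    rw [show V * (X * (Vᵀ * F⁻¹)) = (V * X * Vᵀ) * F⁻¹ from by
      simp only [Matrix.mul_assoc]]
    exact Matrix.trace_mul_comm _ _
  have tB4 : Matrix.trace ((C * X * Cᵀ) * Fᵀ) = B := by
    rw [hBdef, hFs, hCdef, Matrix.transpose_mul, hFinvs]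
    simp only [Matrix.mul_assoc, hFinv2, Matrix.mul_one]
  have hmain : (∫ τ in I, (x τ) ⬝ᵥ X.mulVec (x τ)) - B ≥ 0 := by
    have h := hq0
    rw [hsplit, e2, e3, e4, tB2, tB3, tB4] at h
    linarith
  have hrhs : v ⬝ᵥ ((F⁻¹ ⊗ₖ X).mulVec v) = B := by
    rw [kron_trace ℓ n F⁻¹ hFis X v, ← hVdef]
  rw [hrhs]; linarith
end

section
/- Let I ⊆ ℝ be measurable with finite positive measure, and suppose g : I → ℝ^λ and f : I → ℝ^ℓ are square-integrable with the stacked Gram matrix ∫_I [g;f][g;f]ᵀ dτ positive definite. Set F = ∫_I f fᵀ dτ, A = (∫_I g fᵀ dτ) F^{-1}, e(τ) = g(τ) − A f(τ), and E = ∫_I e eᵀ dτ. Then E is positive definite, and for any symmetric positive semidefinite X ∈ ℝ^{n×n} and square-integrable x : I → ℝ^n: ∫_I xᵀ X x dτ ≥ v₁ᵀ (F^{-1} ⊗ X) v₁ + v₂ᵀ (E^{-1} ⊗ X) v₂, where v₁ = ∫_I (f(τ) ⊗ I_n) x(τ) dτ and v₂ = ∫_I (e(τ) ⊗ I_n) x(τ)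 dτ. -/
open Matrix MeasureTheory
open scoped Kronecker

lemma l2mul {μ : Measure ℝ} {f g : ℝ → ℝ} (hf : MemLp f 2 μ) (hg : MemLp g 2 μ) :
    Integrable (fun τ => f τ * g τ) μ := by
  rw [← memLp_one_iff_integrable]
  have h := hg.smul (r := 1) hf
  exact h

lemma gram_expand {ι : Type*} [Fintype ι] {μ : Measure ℝ} (φ : ℝ → ι → ℝ)
    (hφ : ∀ i, MemLp (fun τ => φ τ i) 2 μ) (v w : ι → ℝ) :
    ∫ τ, (∑ i, v i * φ τ i) * (∑ j, w j * φ τ j) ∂μ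
      = ∑ i, ∑ j, v i * w j * ∫ τ, φ τ i * φ τ j ∂μ := by
  have hpt : ∀ τ, (∑ i, v i * φ τ i) * (∑ j, w j * φ τ j)
      = ∑ p : ι × ι, v p.1 * w p.2 * (φ τ p.1 * φ τ p.2) := by
    intro τ
    rw [Finset.sum_mul_sum, Fintype.sum_prod_type]
    exact Finset.sum_congr rfl fun i _ => Finset.sum_congr rfl fun j _ => by ring
  simp_rw [hpt]
  rw [integral_finset_sum _ (fun p _ => (Integrable.const_mul (l2mul (hφ p.1) (hφ p.2)) _)),
    Fintype.sum_prod_type]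
  exact Finset.sum_congr rfl fun i _ => Finset.sum_congr rfl fun j _ => integral_const_mul _ _

-- quadratic form of the Gram matrix
lemma gram_quad {ι : Type*} [Fintype ι] {μ : Measure ℝ} (φ : ℝ → ι → ℝ)
    (hφ : ∀ i, MemLp (fun τ => φ τ i) 2 μ) (v : ι → ℝ) :
    v ⬝ᵥ ((Matrix.of fun i j => ∫ τ, φ τ i * φ τ j ∂μ) *ᵥ v)
      = ∫ τ, (∑ i, v i * φ τ i) * (∑ i, v i * φ τ i) ∂μ := by
  rw [gram_expand φ hφ v v]
  simp only [dotProduct, mulVec, Matrix.of_apply, Finset.mul_sum]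
  exact Finset.sum_congr rfl fun i _ => Finset.sum_congr rfl fun j _ => by ring

lemma gram_posSemidef {ι : Type*} [Fintype ι] {μ : Measure ℝ} (φ : ℝ → ι → ℝ)
    (hφ : ∀ i, MemLp (fun τ => φ τ i) 2 μ) :
    (Matrix.of fun i j => ∫ τ, φ τ i * φ τ j ∂μ : Matrix ι ι ℝ).PosSemidef := by
  refine Matrix.PosSemidef.of_dotProduct_mulVec_nonneg ?_ ?_
  · ext i j
    simp only [conjTranspose_apply, Matrix.of_apply, star_trivial]
    exact integral_congr_ae (Filter.Eventually.of_forall fun τ => mul_comm _ _)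
  · intro v
    simp only [star_trivial]
    rw [gram_quad φ hφ v]
    exact integral_nonneg fun τ => mul_self_nonneg _

lemma psd_trace_nonneg {n : ℕ} {M : Matrix (Fin n) (Fin n) ℝ} (hM : M.PosSemidef) :
    0 ≤ M.trace := by
  refine Finset.sum_nonneg fun k _ => ?_
  have := hM.dotProduct_mulVec_nonneg (Pi.single k 1)
  simpa [dotProduct, mulVec, Pi.single_apply, Finset.mul_sum] using this

lemma trace_pair_nonneg {n : ℕ} {X N : Matrix (Fin n) (Fin n) ℝ}
    (hX : X.PosSemidef) (hN : N.PosSemidef) :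
    0 ≤ ∑ k, ∑ k', X k k' * N k k' := by
  obtain ⟨Y, hY⟩ : ∃ Y : Matrix (Fin n) (Fin n) ℝ, X = Yᴴ * Y := by
    open scoped MatrixOrder in exact CStarAlgebra.nonneg_iff_eq_star_mul_self.mp hX.nonneg
  have hNsymm : ∀ a b, N a b = N b a := fun a b => by
    conv_lhs => rw [← hN.1]
    simp [conjTranspose_apply]
  have key : ∑ k, ∑ k', X k k' * N k k' = (X * N).trace := by
    simp only [Matrix.trace, Matrix.diag, Matrix.mul_apply]
    exact Finset.sum_congr rfl fun k _ => Finset.sum_congr rfl fun j _ => by rw [hNsymm k j]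
  rw [key, hY, Matrix.mul_assoc, Matrix.trace_mul_comm]
  exact psd_trace_nonneg (hN.mul_mul_conjTranspose_same Y)

lemma four_swap {α β γ δ : Type*} [Fintype α] [Fintype β] [Fintype γ] [Fintype δ]
    (t : α → β → γ → δ → ℝ) :
    ∑ j : α, ∑ k : γ, ∑ j' : β, ∑ k' : δ, t j j' k k'
      = ∑ k : γ, ∑ k' : δ, ∑ j : α, ∑ j' : β, t j j' k k' := by
  rw [Finset.sum_comm]
  refine Finset.sum_congr rfl fun k _ => ?_
  have h1 : ∀ j, ∑ j' : β, ∑ k' : δ, t j j' k k' = ∑ k' : δ, ∑ j' : β, t j j' k k' :=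
    fun j => Finset.sum_comm
  simp_rw [h1]
  exact Finset.sum_comm

lemma kron_quad {m n : ℕ} (M : Matrix (Fin m) (Fin m) ℝ) (X : Matrix (Fin n) (Fin n) ℝ)
    (v : Fin m × Fin n → ℝ) :
    v ⬝ᵥ ((M ⊗ₖ X) *ᵥ v)
      = ∑ k, ∑ k', X k k' * (∑ j, ∑ j', v (j, k) * M j j' * v (j', k')) := by
  simp only [dotProduct, mulVec, kroneckerMap_apply, Fintype.sum_prod_type]
  simp_rw [Finset.mul_sum]
  rw [four_swap (fun j j' k k' => v (j, k) * (M j j' * X k k' * v (j', k')))]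
  exact Finset.sum_congr rfl fun k _ => Finset.sum_congr rfl fun k' _ =>
    Finset.sum_congr rfl fun j _ => Finset.sum_congr rfl fun j' _ => by ring

set_option maxHeartbeats 2000000 in
/-- Refined Bessel-type integral inequality with the approximation-error direction:
`E ≻ 0` and `∫ xᵀ X x ≥ v₁ᵀ (F⁻¹ ⊗ X) v₁ + v₂ᵀ (E⁻¹ ⊗ X) v₂`. -/
theorem stmt6 (lam ℓ n : ℕ) (I : Set ℝ) (hI : MeasurableSet I)
    (h0 : 0 < volume I) (hfin : volume I < ⊤)
    (g : ℝ → Fin lam → ℝ) (f : ℝ → Fin ℓ → ℝ)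
    (hg : ∀ i, MemLp (fun τ => g τ i) 2 (volume.restrict I))
    (hf : ∀ i, MemLp (fun τ => f τ i) 2 (volume.restrict I))
    (hstack : (Matrix.of fun i j =>
        ∫ τ in I, Sum.elim (g τ) (f τ) i * Sum.elim (g τ) (f τ) j :
        Matrix (Fin lam ⊕ Fin ℓ) (Fin lam ⊕ Fin ℓ) ℝ).PosDef)
    (F : Matrix (Fin ℓ) (Fin ℓ) ℝ)
    (hFdef : F = Matrix.of fun i j => ∫ τ in I, f τ i * f τ j)
    (A : Matrix (Fin lam) (Fin ℓ) ℝ)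
    (hA : A = (Matrix.of fun i j => ∫ τ in I, g τ i * f τ j) * F⁻¹)
    (e : ℝ → Fin lam → ℝ)
    (he : ∀ τ i, e τ i = g τ i - ∑ j, A i j * f τ j)
    (E : Matrix (Fin lam) (Fin lam) ℝ)
    (hEdef : E = Matrix.of fun i j => ∫ τ in I, e τ i * e τ j)
    (X : Matrix (Fin n) (Fin n) ℝ) (hX : X.PosSemidef)
    (x : ℝ → Fin n → ℝ)
    (hx : ∀ k, MemLp (fun τ => x τ k) 2 (volume.restrict I))
    (v₁ : Fin ℓ × Fin n → ℝ) (hv₁ : v₁ = fun p => ∫ τ in I, f τ p.1 * x τ p.2)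
    (v₂ : Fin lam × Fin n → ℝ) (hv₂ : v₂ = fun p => ∫ τ in I, e τ p.1 * x τ p.2) :
    E.PosDef ∧
      (∫ τ in I, (x τ) ⬝ᵥ (X.mulVec (x τ)))
        ≥ v₁ ⬝ᵥ ((F⁻¹ ⊗ₖ X).mulVec v₁) + v₂ ⬝ᵥ ((E⁻¹ ⊗ₖ X).mulVec v₂) := by
  -- basic L² facts
  have hb : ∀ s, MemLp (fun τ => Sum.elim (g τ) (f τ) s) 2 (volume.restrict I) := by
    rintro (i | j)
    · exact hg i
    · exact hf j
  have he2 : ∀ i, MemLp (fun τ => e τ i) 2 (volume.restrict I) := by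
    intro i
    have hfun : (fun τ => e τ i) = fun τ => g τ i - ∑ j, A i j * f τ j :=
      funext fun τ => he τ i
    rw [hfun]
    exact (hg i).sub (memLp_finsetSum _ fun j _ => ((hf j).const_mul (A i j)))
  -- F is positive definite
  have hFpos : F.PosDef := by
    refine Matrix.PosDef.of_dotProduct_mulVec_pos ?_ ?_
    · rw [hFdef]; exact (gram_posSemidef f hf).1
    · intro v hv
      set u : Fin lam ⊕ Fin ℓ → ℝ := Sum.elim 0 v with hu
      have hune : u ≠ 0 := by
        intro h
        exact hv (funext fun j => congrFun h (Sum.inr j))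
      have hpt : ∀ τ : ℝ, ∑ s, u s * Sum.elim (g τ) (f τ) s = ∑ j, v j * f τ j := by
        intro τ
        simp [hu, Fintype.sum_sum_type]
      have key : star v ⬝ᵥ (F *ᵥ v)
          = star u ⬝ᵥ ((Matrix.of fun i j =>
              ∫ τ in I, Sum.elim (g τ) (f τ) i * Sum.elim (g τ) (f τ) j) *ᵥ u) := by
        rw [show (star v) = v from by simp, show (star u) = u from by simp,
          hFdef, gram_quad f hf v, gram_quad _ hb u]
        exact (integral_congr_ae (Filter.Eventually.of_forall fun τ => by rw [hpt τ])).symm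
      rw [key]
      exact hstack.dotProduct_mulVec_pos hune
  have hdetF : IsUnit F.det := (Matrix.isUnit_iff_isUnit_det F).mp hFpos.isUnit
  -- A * F recovers the cross Gram matrix
  have hAF : A * F = Matrix.of fun i j => ∫ τ in I, g τ i * f τ j := by
    rw [hA, Matrix.mul_assoc, Matrix.nonsing_inv_mul F hdetF, Matrix.mul_one]
  -- orthogonality of e against f
  have horth : ∀ i j, (∫ τ in I, e τ i * f τ j) = 0 := by
    intro i j
    have hfun : (fun τ => e τ i * f τ j)
        = fun τ => g τ i * f τ j - ∑ k, A i k * (f τ k * f τ j) := by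
      funext τ
      rw [he τ i, sub_mul, Finset.sum_mul]
      congr 1
      exact Finset.sum_congr rfl fun k _ => by ring
    have hint : (∫ τ in I, e τ i * f τ j)
        = (∫ τ in I, g τ i * f τ j) - ∑ k, A i k * ∫ τ in I, f τ k * f τ j := by
      rw [hfun, integral_sub (l2mul (hg i) (hf j))
        (integrable_finset_sum _ fun k _ => ((l2mul (hf k) (hf j)).const_mul _)),
        integral_finset_sum _ (fun k _ => ((l2mul (hf k) (hf j)).const_mul _))]
      simp_rw [integral_const_mul]
    have h2 : ∑ k, A i k * ∫ τ in I, f τ k * f τ j = ∫ τ in I, g τ i * f τ j := by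
      have h3 := congrFun (congrFun hAF i) j
      simp only [Matrix.mul_apply, Matrix.of_apply, hFdef] at h3
      exact h3
    rw [hint, h2, sub_self]
  -- E is positive definite
  have hEpos : E.PosDef := by
    refine Matrix.PosDef.of_dotProduct_mulVec_pos ?_ ?_
    · rw [hEdef]; exact (gram_posSemidef e he2).1
    · intro v hv
      set u : Fin lam ⊕ Fin ℓ → ℝ := Sum.elim v (fun j => -∑ i, v i * A i j) with hu
      have hune : u ≠ 0 := by
        intro h
        exact hv (funext fun i => congrFun h (Sum.inl i))
      have hpt : ∀ τ : ℝ, ∑ s, u s * Sum.elim (g τ) (f τ) s = ∑ i, v i * e τ i := by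
        intro τ
        simp only [hu, Fintype.sum_sum_type, Sum.elim_inl, Sum.elim_inr]
        simp_rw [he]
        have h1 : ∑ i, v i * (g τ i - ∑ j, A i j * f τ j)
            = ∑ i, v i * g τ i - ∑ j, ∑ i, v i * (A i j * f τ j) := by
          rw [Finset.sum_comm, ← Finset.sum_sub_distrib]
          exact Finset.sum_congr rfl fun i _ => by rw [mul_sub, Finset.mul_sum]
        rw [h1, sub_eq_add_neg, ← Finset.sum_neg_distrib]
        refine congrArg _ (Finset.sum_congr rfl fun j _ => ?_)
        rw [neg_mul, Finset.sum_mul]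
        exact congrArg Neg.neg (Finset.sum_congr rfl fun i _ => by ring)
      have key : star v ⬝ᵥ (E *ᵥ v)
          = star u ⬝ᵥ ((Matrix.of fun i j =>
              ∫ τ in I, Sum.elim (g τ) (f τ) i * Sum.elim (g τ) (f τ) j) *ᵥ u) := by
        rw [show (star v) = v from by simp, show (star u) = u from by simp,
          hEdef, gram_quad e he2 v, gram_quad _ hb u]
        exact (integral_congr_ae (Filter.Eventually.of_forall fun τ => by rw [hpt τ])).symm
      rw [key]
      exact hstack.dotProduct_mulVec_pos hune
  have hdetE : IsUnit E.det := (Matrix.isUnit_iff_isUnit_det E).mp hEpos.isUnit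
  refine ⟨hEpos, ?_⟩
  -- the big Gram matrix and its blocks
  set Wm : Matrix (Fin lam ⊕ Fin ℓ) (Fin n) ℝ :=
    Matrix.of fun s k => ∫ τ in I, Sum.elim (e τ) (f τ) s * x τ k with hWm
  set Sm : Matrix (Fin n) (Fin n) ℝ :=
    Matrix.of fun k k' => ∫ τ in I, x τ k * x τ k' with hSm
  set Dm : Matrix (Fin lam ⊕ Fin ℓ) (Fin lam ⊕ Fin ℓ) ℝ :=
    Matrix.fromBlocks E 0 0 F with hDm
  have hΦ : ∀ s, MemLp
      (fun τ => Sum.elim (Sum.elim (e τ) (f τ)) (x τ) s) 2 (volume.restrict I) := by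
    rintro ((i | j) | k)
    · exact he2 i
    · exact hf j
    · exact hx k
  have hblockPSD : (Matrix.fromBlocks Dm Wm Wmᴴ Sm).PosSemidef := by
    have hpsd := gram_posSemidef _ hΦ
    have hEq : (Matrix.of fun s t => ∫ τ in I,
        Sum.elim (Sum.elim (e τ) (f τ)) (x τ) s * Sum.elim (Sum.elim (e τ) (f τ)) (x τ) t)
        = Matrix.fromBlocks Dm Wm Wmᴴ Sm := by
      ext s t
      rcases s with s | k <;> rcases t with t | k'
      · rcases s with j | i <;> rcases t with j' | i'
        · simp [hDm, hEdef]
        · simp only [Matrix.of_apply, Sum.elim_inl, Sum.elim_inr,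
            Matrix.fromBlocks_apply₁₁, hDm, Matrix.fromBlocks_apply₁₂, Matrix.zero_apply]
          exact horth j i'
        · simp only [Matrix.of_apply, Sum.elim_inl, Sum.elim_inr,
            Matrix.fromBlocks_apply₁₁, hDm, Matrix.fromBlocks_apply₂₁, Matrix.zero_apply]
          rw [← horth j' i]
          exact integral_congr_ae (Filter.Eventually.of_forall fun τ => mul_comm _ _)
        · simp [hDm, hFdef]
      · simp [hWm]
      · simp only [Matrix.of_apply, Sum.elim_inl, Sum.elim_inr,
          Matrix.fromBlocks_apply₂₁, Matrix.conjTranspose_apply, hWm, star_trivial]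
        exact integral_congr_ae (Filter.Eventually.of_forall fun τ => mul_comm _ _)
      · simp [hSm]
    rw [← hEq]
    exact hpsd
  -- Dm is positive definite
  have hDpos : Dm.PosDef := by
    refine Matrix.PosDef.of_dotProduct_mulVec_pos ?_ ?_
    · rw [hDm, Matrix.isHermitian_fromBlocks_iff]
      exact ⟨hEpos.1, by simp, by simp, hFpos.1⟩
    · intro u hu
      have hsplit : star u ⬝ᵥ (Dm *ᵥ u)
          = (u ∘ Sum.inl) ⬝ᵥ (E *ᵥ (u ∘ Sum.inl)) + (u ∘ Sum.inr) ⬝ᵥ (F *ᵥ (u ∘ Sum.inr)) := by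
        simp [hDm, Matrix.fromBlocks_mulVec, dotProduct, Fintype.sum_sum_type,
          Function.comp, mulVec]
      rw [hsplit]
      by_cases h1 : u ∘ Sum.inl = 0
      · have h2 : u ∘ Sum.inr ≠ 0 := by
          intro h2
          apply hu
          funext s
          rcases s with i | j
          · exact congrFun h1 i
          · exact congrFun h2 j
        have := hFpos.dotProduct_mulVec_pos h2
        simp only [star_trivial] at this
        have hE0 := hEpos.posSemidef.dotProduct_mulVec_nonneg (u ∘ Sum.inl)
        simp only [star_trivial] at hE0
        linarith
      · have := hEpos.dotProduct_mulVec_pos h1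
        simp only [star_trivial] at this
        have hF0 := hFpos.posSemidef.dotProduct_mulVec_nonneg (u ∘ Sum.inr)
        simp only [star_trivial] at hF0
        linarith
  have hDinv : Dm⁻¹ = Matrix.fromBlocks E⁻¹ 0 0 F⁻¹ := by
    apply Matrix.inv_eq_left_inv
    rw [hDm, Matrix.fromBlocks_multiply]
    simp [Matrix.nonsing_inv_mul E hdetE, Matrix.nonsing_inv_mul F hdetF,
      ← Matrix.fromBlocks_one]
  haveI : Invertible Dm := hDpos.isUnit.invertible
  have hSchur : (Sm - Wmᴴ * Dm⁻¹ * Wm).PosSemidef :=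
    (Matrix.PosDef.fromBlocks₁₁ Wm Sm hDpos).mp hblockPSD
  -- identify W entries with v₁, v₂
  have hWv₂ : ∀ j k, Wm (Sum.inl j) k = v₂ (j, k) := by
    intro j k
    rw [hv₂]
    rfl
  have hWv₁ : ∀ i k, Wm (Sum.inr i) k = v₁ (i, k) := by
    intro i k
    rw [hv₁]
    rfl
  -- LHS expansion
  have hLHS : (∫ τ in I, (x τ) ⬝ᵥ (X.mulVec (x τ))) = ∑ k, ∑ k', X k k' * Sm k k' := by
    have hpt : ∀ τ, (x τ) ⬝ᵥ (X.mulVec (x τ))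
        = ∑ p : Fin n × Fin n, X p.1 p.2 * (x τ p.1 * x τ p.2) := by
      intro τ
      rw [Fintype.sum_prod_type]
      simp only [dotProduct, mulVec, Finset.mul_sum]
      exact Finset.sum_congr rfl fun k _ => Finset.sum_congr rfl fun k' _ => by ring
    simp_rw [hpt]
    rw [integral_finset_sum _ (fun p _ => ((l2mul (hx p.1) (hx p.2)).const_mul _)),
      Fintype.sum_prod_type]
    exact Finset.sum_congr rfl fun k _ => Finset.sum_congr rfl fun k' _ =>
      integral_const_mul _ _
  -- RHS expansion
  have hR : ∀ k k', (Wmᴴ * Dm⁻¹ * Wm) k k'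
      = (∑ j, ∑ j', v₂ (j, k) * E⁻¹ j j' * v₂ (j', k'))
        + (∑ i, ∑ i', v₁ (i, k) * F⁻¹ i i' * v₁ (i', k')) := by
    intro k k'
    rw [hDinv]
    simp only [Matrix.mul_apply, Matrix.conjTranspose_apply, star_trivial,
      Fintype.sum_sum_type, Matrix.fromBlocks_apply₁₁, Matrix.fromBlocks_apply₁₂,
      Matrix.fromBlocks_apply₂₁, Matrix.fromBlocks_apply₂₂, Matrix.zero_apply,
      zero_mul, mul_zero, add_zero, zero_add, Finset.sum_const_zero,
      Finset.sum_mul, Finset.mul_sum, hWv₁, hWv₂]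
    congr 1
    · exact Finset.sum_comm
    · exact Finset.sum_comm
  have hRHS : v₁ ⬝ᵥ ((F⁻¹ ⊗ₖ X).mulVec v₁) + v₂ ⬝ᵥ ((E⁻¹ ⊗ₖ X).mulVec v₂)
      = ∑ k, ∑ k', X k k' * (Wmᴴ * Dm⁻¹ * Wm) k k' := by
    rw [kron_quad, kron_quad, ← Finset.sum_add_distrib]
    refine Finset.sum_congr rfl fun k _ => ?_
    rw [← Finset.sum_add_distrib]
    refine Finset.sum_congr rfl fun k' _ => ?_
    rw [hR k k']
    ring
  -- combine
  have hfinal := trace_pair_nonneg hX hSchur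
  have hsplit : ∑ k, ∑ k', X k k' * (Sm - Wmᴴ * Dm⁻¹ * Wm) k k'
      = (∑ k, ∑ k', X k k' * Sm k k')
        - ∑ k, ∑ k', X k k' * (Wmᴴ * Dm⁻¹ * Wm) k k' := by
    rw [← Finset.sum_sub_distrib]
    refine Finset.sum_congr rfl fun k _ => ?_
    rw [← Finset.sum_sub_distrib]
    refine Finset.sum_congr rfl fun k' _ => ?_
    simp [Matrix.sub_apply, mul_sub]
  rw [ge_iff_le, hRHS, hLHS]
  rw [hsplit] at hfinal
  linarith
end

section
/- (Projection Lemma) Given n, p, q ∈ ℕ, a symmetric matrix Π ∈ ℝ^{n×n}, and matrices P ∈ ℝ^{q×n}, Q ∈ ℝ^{p×n}, there exists Θ ∈ ℝ^{p×q} such that Π + Pᵀ Θᵀ Q + Qᵀ Θ P ≺ 0 if and only if P⊥ᵀ Π P⊥ ≺ 0 and Q⊥ᵀ Π Q⊥ ≺ 0, where the columns of P⊥ and Q⊥ form bases of the null spaces of P and Q respectively. -/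
open Matrix Submodule LinearMap

noncomputable section

variable {n p q : ℕ}

/-- bilinear form of a matrix -/
def bf {n : ℕ} (M : Matrix (Fin n) (Fin n) ℝ) : (Fin n → ℝ) →ₗ[ℝ] (Fin n → ℝ) →ₗ[ℝ] ℝ :=
  Matrix.toLinearMap₂' ℝ M

lemma bf_apply (M : Matrix (Fin n) (Fin n) ℝ) (x y : Fin n → ℝ) :
    bf M x y = x ⬝ᵥ M *ᵥ y := Matrix.toLinearMap₂'_apply' M x y

lemma bf_symm {M : Matrix (Fin n) (Fin n) ℝ} (hM : M.IsSymm) (x y : Fin n → ℝ) :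
    bf M x y = bf M y x := by
  rw [bf_apply, bf_apply, dotProduct_mulVec, ← Matrix.mulVec_transpose, hM.eq,
    dotProduct_comm]

/-- crude quadratic form bound -/
lemma quad_bound (N : Matrix (Fin n) (Fin n) ℝ) (x : Fin n → ℝ) :
    x ⬝ᵥ N *ᵥ x ≤ (∑ i, ∑ j, |N i j|) * (x ⬝ᵥ x) := by
  have hx2 : ∀ i : Fin n, x i * x i ≤ x ⬝ᵥ x := by
    intro i
    have : ∀ j ∈ Finset.univ, (0:ℝ) ≤ x j * x j := fun j _ => mul_self_nonneg _
    exact Finset.single_le_sum this (Finset.mem_univ i)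
  have hxx : ∀ i j : Fin n, |x i| * |x j| ≤ x ⬝ᵥ x := by
    intro i j
    have h1 : |x i| ^ 2 ≤ x ⬝ᵥ x := by rw [sq_abs]; simpa [sq] using hx2 i
    have h2 : |x j| ^ 2 ≤ x ⬝ᵥ x := by rw [sq_abs]; simpa [sq] using hx2 j
    nlinarith [abs_nonneg (x i), abs_nonneg (x j)]
  have : x ⬝ᵥ N *ᵥ x = ∑ i, ∑ j, x i * (N i j * x j) := by
    simp [dotProduct, Matrix.mulVec, Finset.mul_sum]
  rw [this, Finset.sum_mul]
  refine Finset.sum_le_sum fun i _ => ?_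
  rw [Finset.sum_mul]
  refine Finset.sum_le_sum fun j _ => ?_
  calc x i * (N i j * x j) ≤ |x i * (N i j * x j)| := le_abs_self _
    _ = |N i j| * (|x i| * |x j|) := by rw [abs_mul, abs_mul]; ring
    _ ≤ |N i j| * (x ⬝ᵥ x) := mul_le_mul_of_nonneg_left (hxx i j) (abs_nonneg _)

lemma dot_self_pos {x : Fin n → ℝ} (hx : x ≠ 0) : 0 < x ⬝ᵥ x := by
  rcases Function.ne_iff.1 hx with ⟨i, hi⟩
  have hne : x i ≠ 0 := by simpa using hi
  have : (0:ℝ) < x i * x i := mul_self_pos.2 hne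
  exact Finset.sum_pos' (fun j _ => mul_self_nonneg _) ⟨i, Finset.mem_univ i, this⟩

lemma key_abstract (B : (Fin n → ℝ) →ₗ[ℝ] (Fin n → ℝ) →ₗ[ℝ] ℝ)
    (hsym : ∀ x y, B x y = B y x)
    (x v a z w bT dT : Fin n → ℝ) (hx : x = v + w) (hv : v = a + z) (hw : w = bT + dT)
    (hz : B z w = 0) (cxx r : ℝ)
    (hc : cxx = -B dT bT - (1/2)*B dT dT - (1/2)*r - B a w) :
    B x x + 2*cxx = B v v + B bT bT - r := by
  subst hx hv hw hc
  simp only [map_add, LinearMap.add_apply] at *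
  linear_combination 2*hz + hsym bT a + hsym dT a + hsym bT z + hsym dT z + hsym bT dT

set_option maxHeartbeats 2000000 in
theorem hard_dir (Pi : Matrix (Fin n) (Fin n) ℝ) (hPi : Pi.IsSymm)
    (P : Matrix (Fin q) (Fin n) ℝ) (Q : Matrix (Fin p) (Fin n) ℝ)
    (hP : ∀ x : Fin n → ℝ, x ≠ 0 → P.mulVec x = 0 → x ⬝ᵥ (Pi.mulVec x) < 0)
    (hQ : ∀ x : Fin n → ℝ, x ≠ 0 → Q.mulVec x = 0 → x ⬝ᵥ (Pi.mulVec x) < 0) :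
    ∃ Θ : Matrix (Fin p) (Fin q) ℝ,
        ∀ x : Fin n → ℝ, x ≠ 0 →
          x ⬝ᵥ ((Pi + Pᵀ * Θᵀ * Q + Qᵀ * Θ * P).mulVec x) < 0 := by
  classical
  have hsym : ∀ x y, bf Pi x y = bf Pi y x := bf_symm hPi
  set A : Submodule ℝ (Fin n → ℝ) := LinearMap.ker P.mulVecLin with hAdef
  set Bs : Submodule ℝ (Fin n → ℝ) := LinearMap.ker Q.mulVecLin with hBsdef
  set C : Submodule ℝ (Fin n → ℝ) := A ⊓ Bs with hCdef
  have hCA : C ≤ A := inf_le_left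
  have hCB : C ≤ Bs := inf_le_right
  have hmemA : ∀ x, x ∈ A ↔ P *ᵥ x = 0 := fun x => by
    simp [hAdef, LinearMap.mem_ker, Matrix.mulVecLin_apply]
  have hmemB : ∀ x, x ∈ Bs ↔ Q *ᵥ x = 0 := fun x => by
    simp [hBsdef, LinearMap.mem_ker, Matrix.mulVecLin_apply]
  -- nonpositivity of the form on A and Bs
  have hA0 : ∀ z ∈ A, bf Pi z z ≤ 0 := by
    intro z hz
    rcases eq_or_ne z 0 with rfl | hzne
    · simp
    · exact le_of_lt (by rw [bf_apply]; exact hP z hzne ((hmemA z).1 hz))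
  have hB0 : ∀ z ∈ Bs, bf Pi z z ≤ 0 := by
    intro z hz
    rcases eq_or_ne z 0 with rfl | hzne
    · simp
    · exact le_of_lt (by rw [bf_apply]; exact hQ z hzne ((hmemB z).1 hz))
  -- construct B' : complement of C inside Bs
  obtain ⟨W, hW⟩ := Submodule.exists_isCompl (C.comap Bs.subtype)
  set B' : Submodule ℝ (Fin n → ℝ) := W.map Bs.subtype with hB'def
  have hB'le : B' ≤ Bs := map_subtype_le _ _
  have hCB'disj : C ⊓ B' = ⊥ := by
    rw [eq_bot_iff]
    rintro x ⟨hxC, hxB'⟩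
    obtain ⟨⟨y, hyBs⟩, hyW, rfl⟩ := hxB'
    have : (⟨y, hyBs⟩ : ↥Bs) ∈ C.comap Bs.subtype ⊓ W := ⟨hxC, hyW⟩
    rw [hW.inf_eq_bot] at this
    simpa using congrArg (Bs.subtype) this
  have hCB'sup : C ⊔ B' = Bs := by
    have h1 : Submodule.map Bs.subtype (C.comap Bs.subtype) = C := by
      rw [Submodule.map_comap_subtype, inf_eq_right.2 hCB]
    calc C ⊔ B' = Submodule.map Bs.subtype (C.comap Bs.subtype ⊔ W) := by
          rw [Submodule.map_sup, h1]
      _ = Bs := by rw [hW.sup_eq_top, Submodule.map_subtype_top]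
  obtain ⟨D, hD⟩ := Submodule.exists_isCompl (A ⊔ Bs)
  obtain ⟨U, hU⟩ := Submodule.exists_isCompl (C ⊔ B')
  have hABsup : A ⊔ B' = A ⊔ Bs := by
    rw [← hCB'sup, ← sup_assoc, sup_eq_left.2 hCA]
  -- IsCompl facts
  have hAc : IsCompl A (B' ⊔ D) := by
    constructor
    · rw [disjoint_iff, eq_bot_iff]
      rintro x ⟨hxA, hxBD⟩
      obtain ⟨b', hb', d, hd, hx⟩ := Submodule.mem_sup.1 hxBD
      have hdAB : d ∈ A ⊔ Bs := by
        have : d = x - b' := by rw [← hx]; abel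
        rw [this]
        exact sub_mem (le_sup_left (a := A) (b := Bs) hxA)
          (le_sup_right (a := A) (b := Bs) (hB'le hb'))
      have hd0 : d = 0 := by
        have := hD.disjoint.le_bot ⟨hdAB, hd⟩
        simpa using this
      have hxB' : x ∈ B' := by rw [← hx, hd0, add_zero]; exact hb'
      have hxC : x ∈ C := ⟨hxA, hB'le hxB'⟩
      have hmem : x ∈ C ⊓ B' := Submodule.mem_inf.2 ⟨hxC, hxB'⟩
      rw [hCB'disj] at hmem
      simpa using hmem
    · rw [codisjoint_iff, ← sup_assoc, hABsup, hD.sup_eq_top]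
  have hBc : IsCompl B' (A ⊔ D) := by
    constructor
    · rw [disjoint_iff, eq_bot_iff]
      rintro x ⟨hxB', hxAD⟩
      obtain ⟨a, ha, d, hd, hx⟩ := Submodule.mem_sup.1 hxAD
      have hdAB : d ∈ A ⊔ Bs := by
        have : d = x - a := by rw [← hx]; abel
        rw [this]
        exact sub_mem (le_sup_right (a := A) (b := Bs) (hB'le hxB'))
          (le_sup_left (a := A) (b := Bs) ha)
      have hd0 : d = 0 := by
        have := hD.disjoint.le_bot ⟨hdAB, hd⟩
        simpa using this
      have hxA : x ∈ A := by rw [← hx, hd0, add_zero]; exact ha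
      have hxC : x ∈ C := ⟨hxA, hB'le hxB'⟩
      have hmem : x ∈ C ⊓ B' := Submodule.mem_inf.2 ⟨hxC, hxB'⟩
      rw [hCB'disj] at hmem
      simpa using hmem
    · rw [codisjoint_iff]
      rw [← sup_assoc, sup_comm B' A, hABsup, hD.sup_eq_top]
  have hCc : IsCompl C (B' ⊔ U) := by
    constructor
    · rw [disjoint_iff, eq_bot_iff]
      rintro x ⟨hxC, hxBU⟩
      obtain ⟨b', hb', u, hu, hx⟩ := Submodule.mem_sup.1 hxBU
      have huCB : u ∈ C ⊔ B' := by
        have : u = x - b' := by rw [← hx]; abel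
        rw [this]
        exact sub_mem (le_sup_left (a := C) (b := B') hxC)
          (le_sup_right (a := C) (b := B') hb')
      have hu0 : u = 0 := by
        have := hU.disjoint.le_bot ⟨huCB, hu⟩
        simpa using this
      have hxB' : x ∈ B' := by rw [← hx, hu0, add_zero]; exact hb'
      have hmem : x ∈ C ⊓ B' := Submodule.mem_inf.2 ⟨hxC, hxB'⟩
      rw [hCB'disj] at hmem
      simpa using hmem
    · rw [codisjoint_iff, ← sup_assoc, hU.sup_eq_top]
  -- projections
  set fD : (Fin n → ℝ) →ₗ[ℝ] (Fin n → ℝ) :=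
    D.subtype ∘ₗ D.linearProjOfIsCompl (A ⊔ Bs) hD.symm with hfDdef
  set fB : (Fin n → ℝ) →ₗ[ℝ] (Fin n → ℝ) :=
    B'.subtype ∘ₗ B'.linearProjOfIsCompl (A ⊔ D) hBc with hfBdef
  set fC : (Fin n → ℝ) →ₗ[ℝ] (Fin n → ℝ) :=
    C.subtype ∘ₗ C.linearProjOfIsCompl (B' ⊔ U) hCc with hfCdef
  set gA : (Fin n → ℝ) →ₗ[ℝ] (Fin n → ℝ) :=
    A.subtype ∘ₗ A.linearProjOfIsCompl (B' ⊔ D) hAc with hgAdef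
  have hfDmem : ∀ x, fD x ∈ D := fun x => SetLike.coe_mem _
  have hfBmem : ∀ x, fB x ∈ B' := fun x => SetLike.coe_mem _
  have hfCmem : ∀ x, fC x ∈ C := fun x => SetLike.coe_mem _
  have hgAmem : ∀ x, gA x ∈ A := fun x => SetLike.coe_mem _
  have hfD0 : ∀ x ∈ A ⊔ Bs, fD x = 0 := by
    intro x hx
    exact (congrArg D.subtype (Submodule.projectionOnto_apply_of_mem_right hD.symm hx)).trans (map_zero _)
  have hfDfix : ∀ x ∈ D, fD x = x := by
    intro x hx
    have := Submodule.linearProjOfIsCompl_apply_left hD.symm ⟨x, hx⟩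
    exact congrArg (Subtype.val) this
  have hfB0 : ∀ x ∈ A ⊔ D, fB x = 0 := by
    intro x hx
    exact (congrArg B'.subtype (Submodule.projectionOnto_apply_of_mem_right hBc hx)).trans (map_zero _)
  have hfBfix : ∀ x ∈ B', fB x = x := by
    intro x hx
    have := Submodule.linearProjOfIsCompl_apply_left hBc ⟨x, hx⟩
    exact congrArg (Subtype.val) this
  have hfC0 : ∀ x ∈ B' ⊔ U, fC x = 0 := by
    intro x hx
    exact (congrArg C.subtype (Submodule.projectionOnto_apply_of_mem_right hCc hx)).trans (map_zero _)
  have hfCfix : ∀ x ∈ C, fC x = x := by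
    intro x hx
    have := Submodule.linearProjOfIsCompl_apply_left hCc ⟨x, hx⟩
    exact congrArg (Subtype.val) this
  have hgA0 : ∀ x ∈ B' ⊔ D, gA x = 0 := by
    intro x hx
    exact (congrArg A.subtype (Submodule.projectionOnto_apply_of_mem_right hAc hx)).trans (map_zero _)
  have hgAfix : ∀ x ∈ A, gA x = x := by
    intro x hx
    have := Submodule.linearProjOfIsCompl_apply_left hAc ⟨x, hx⟩
    exact congrArg (Subtype.val) this
  -- decomposition
  have hdecomp : ∀ x, gA x + (fB x + fD x) = x := by
    intro x
    have h1 := Submodule.projection_add_projection_eq_self hAc x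
    set s : Fin n → ℝ := ((B' ⊔ D).linearProjOfIsCompl A hAc.symm x : Fin n → ℝ) with hs
    have hsmem : s ∈ B' ⊔ D := SetLike.coe_mem _
    have hxs : gA x + s = x := h1
    obtain ⟨b', hb', d, hd, hbd⟩ := Submodule.mem_sup.1 hsmem
    have hx2 : x = gA x + (b' + d) := by conv_lhs => rw [← hxs, ← hbd]
    have hfBx : fB x = b' := by
      conv_lhs => rw [hx2]
      rw [map_add, map_add, hfB0 _ (le_sup_left (a := A) (b := D) (hgAmem x)),
        hfBfix _ hb', hfB0 _ (le_sup_right (a := A) (b := D) hd)]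
      abel
    have hfDx : fD x = d := by
      conv_lhs => rw [hx2]
      rw [map_add, map_add, hfD0 _ (le_sup_left (a := A) (b := Bs) (hgAmem x)),
        hfD0 _ (le_sup_right (a := A) (b := Bs) (hB'le hb')), hfDfix _ hd]
      abel
    rw [hfBx, hfDx, ← hx2]
  -- facts for x in Bs and A
  have hBfacts : ∀ x ∈ Bs, fD x = 0 ∧ gA x = fC x := by
    intro x hx
    refine ⟨hfD0 _ (le_sup_right (a := A) (b := Bs) hx), ?_⟩
    obtain ⟨cc, hcc, b', hb', hcb⟩ := Submodule.mem_sup.1 (hCB'sup ▸ hx)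
    have h1 : gA x = cc := by
      conv_lhs => rw [← hcb]
      rw [map_add, hgAfix _ (hCA hcc), hgA0 _ (le_sup_left (a := B') (b := D) hb'), add_zero]
    have h2 : fC x = cc := by
      conv_lhs => rw [← hcb]
      rw [map_add, hfCfix _ hcc, hfC0 _ (le_sup_left (a := B') (b := U) hb'), add_zero]
    rw [h1, h2]
  have hAfacts : ∀ x ∈ A, fB x = 0 ∧ fD x = 0 :=
    fun x hx => ⟨hfB0 _ (le_sup_left (a := A) (b := D) hx),
      hfD0 _ (le_sup_left (a := A) (b := Bs) hx)⟩
  -- the T map: bf-orthogonal projection to C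
  have hCne : ∀ u : ↥C, u ≠ 0 → bf Pi (u : Fin n → ℝ) (u : Fin n → ℝ) < 0 := by
    intro u hu
    have : (u : Fin n → ℝ) ≠ 0 := fun h => hu (Subtype.ext h)
    rw [bf_apply]
    exact hP _ this ((hmemA _).1 (hCA u.2))
  set φ : ↥C →ₗ[ℝ] Module.Dual ℝ ↥C := (bf Pi).compl₁₂ C.subtype C.subtype with hφdef
  have hφinj : Function.Injective φ := by
    rw [injective_iff_map_eq_zero]
    intro u hu
    by_contra hne
    have h1 : φ u u = 0 := by rw [hu]; rfl
    have h2 : φ u u = bf Pi (u : Fin n → ℝ) (u : Fin n → ℝ) := rfl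
    have := hCne u hne
    rw [← h2, h1] at this
    exact lt_irrefl 0 this
  have hφsurj : Function.Surjective φ :=
    (injective_iff_surjective_of_finrank_eq_finrank Subspace.dual_finrank_eq.symm).1 hφinj
  set e := LinearEquiv.ofBijective φ ⟨hφinj, hφsurj⟩ with hedef
  set restr : (Fin n → ℝ) →ₗ[ℝ] Module.Dual ℝ ↥C :=
    (bf Pi).compl₁₂ LinearMap.id C.subtype with hrdef
  set T : (Fin n → ℝ) →ₗ[ℝ] (Fin n → ℝ) :=
    C.subtype ∘ₗ (e.symm : Module.Dual ℝ ↥C →ₗ[ℝ] ↥C) ∘ₗ restr with hTdef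
  have hTmem : ∀ v, T v ∈ C := fun v => SetLike.coe_mem _
  have hT : ∀ v z, z ∈ C → bf Pi (T v) z = bf Pi v z := by
    intro v z hz
    have h1 : φ (e.symm (restr v)) = restr v := e.apply_symm_apply _
    have h2 := congrFun (congrArg (fun (f : Module.Dual ℝ ↥C) => (f : ↥C → ℝ)) h1) ⟨z, hz⟩
    simpa [hφdef, hrdef, hTdef, LinearMap.compl₁₂_apply] using h2
  have hworth : ∀ u z, z ∈ C → bf Pi z (u - T u) = 0 := by
    intro u z hz
    rw [map_sub, hsym z (T u), hT u z hz, hsym u z, sub_self]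
  -- the bound matrix and constant
  set N : Matrix (Fin n) (Fin n) ℝ := LinearMap.toMatrix₂' ℝ ((bf Pi).compl₁₂ T T) with hNdef
  have hN : ∀ d, bf Pi (T d) (T d) = d ⬝ᵥ N *ᵥ d := by
    intro d
    have h1 : Matrix.toLinearMap₂' ℝ N = (bf Pi).compl₁₂ T T := by
      rw [hNdef]; exact Matrix.toLinearMap₂'_toMatrix' _
    have h2 := congrFun (congrArg (fun (f : (Fin n → ℝ) →ₗ[ℝ] (Fin n → ℝ) →ₗ[ℝ] ℝ) => (f d : (Fin n → ℝ) → ℝ)) h1) d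
    rw [← Matrix.toLinearMap₂'_apply' N d d]
    simpa [LinearMap.compl₁₂_apply] using h2.symm
  set K : ℝ := ∑ i, ∑ j, |N i j| with hKdef
  have hKb : ∀ d, -(bf Pi (T d) (T d)) ≤ K * (d ⬝ᵥ d) := by
    intro d
    have h1 := quad_bound (-N) d
    have h2 : ∑ i, ∑ j, |(-N) i j| = K := by simp [hKdef]
    have h3 : d ⬝ᵥ (-N) *ᵥ d = -(d ⬝ᵥ N *ᵥ d) := by
      rw [Matrix.neg_mulVec, dotProduct_neg]
    rw [h2, h3] at h1
    rw [hN d]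
    exact h1
  -- the bilinear correction c
  set idm : (Fin n → ℝ) →ₗ[ℝ] (Fin n → ℝ) := LinearMap.id with hidef
  set c : (Fin n → ℝ) →ₗ[ℝ] (Fin n → ℝ) →ₗ[ℝ] ℝ :=
    -((bf Pi).compl₁₂ ((idm - T) ∘ₗ fD) ((idm - T) ∘ₗ fB))
    - (1/2 : ℝ) • ((bf Pi).compl₁₂ ((idm - T) ∘ₗ fD) ((idm - T) ∘ₗ fD))
    - (1/2 : ℝ) • ((bf Pi).compl₁₂ (T ∘ₗ fD) (T ∘ₗ fD))
    - ((K+1)/2 : ℝ) • ((bf (1 : Matrix (Fin n) (Fin n) ℝ)).compl₁₂ fD fD)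
    - (bf Pi).compl₁₂ (gA - fC) ((idm - T) ∘ₗ (fB + fD)) with hcdef
  have hdot : ∀ x y, bf (1 : Matrix (Fin n) (Fin n) ℝ) x y = x ⬝ᵥ y := by
    intro x y; rw [bf_apply, Matrix.one_mulVec]
  have c_apply : ∀ x y, c x y =
      -(bf Pi (fD x - T (fD x)) (fB y - T (fB y)))
      - (1/2)*(bf Pi (fD x - T (fD x)) (fD y - T (fD y)))
      - (1/2)*(bf Pi (T (fD x)) (T (fD y)))
      - ((K+1)/2)*(fD x ⬝ᵥ fD y)
      - bf Pi (gA x - fC x) ((fB y + fD y) - T (fB y + fD y)) := by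
    intro x y
    rw [← hdot]
    rfl
  have hc1 : ∀ x ∈ Bs, ∀ y, c x y = 0 := by
    intro x hx y
    obtain ⟨h1, h2⟩ := hBfacts x hx
    rw [c_apply, h1, h2]
    simp only [map_zero, sub_zero, LinearMap.map_zero₂, LinearMap.zero_apply,
      zero_dotProduct, mul_zero, neg_zero]
    norm_num
  have hc2 : ∀ y ∈ A, ∀ x, c x y = 0 := by
    intro y hy x
    obtain ⟨h1, h2⟩ := hAfacts y hy
    rw [c_apply, h1, h2]
    simp only [map_zero, sub_zero, add_zero, dotProduct_zero, mul_zero, neg_zero]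
  -- the key identity
  have hkey : ∀ x, bf Pi x x + 2 * c x x =
      bf Pi (x - (fB x + fD x) + T (fB x + fD x)) (x - (fB x + fD x) + T (fB x + fD x))
      + bf Pi (fB x - T (fB x)) (fB x - T (fB x))
      - (bf Pi (T (fD x)) (T (fD x)) + (K+1) * (fD x ⬝ᵥ fD x)) := by
    intro x
    have hu : x - (fB x + fD x) = gA x := sub_eq_of_eq_add (hdecomp x).symm
    refine key_abstract (bf Pi) hsym x _ (gA x - fC x)
      (fC x + T (fB x + fD x)) ((fB x + fD x) - T (fB x + fD x))
      (fB x - T (fB x)) (fD x - T (fD x)) ?_ ?_ ?_ ?_ _ _ ?_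
    · abel
    · rw [hu]; abel
    · rw [map_add]; abel
    · exact hworth _ _ (add_mem (hfCmem x) (hTmem _))
    · rw [c_apply]; ring
  -- realize c via a matrix Θ
  obtain ⟨Bc, hBcc⟩ := Submodule.exists_isCompl Bs
  obtain ⟨Ac, hAcc⟩ := Submodule.exists_isCompl A
  have hf1 : LinearMap.ker (Q.mulVecLin ∘ₗ Bc.subtype) = ⊥ := by
    rw [LinearMap.ker_eq_bot']
    intro m hm
    have hmBs : (m : Fin n → ℝ) ∈ Bs := by
      rw [hBsdef, LinearMap.mem_ker]
      exact hm
    have : (m : Fin n → ℝ) ∈ Bs ⊓ Bc := ⟨hmBs, m.2⟩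
    rw [hBcc.inf_eq_bot] at this
    exact Subtype.ext ((Submodule.mem_bot ℝ).1 this)
  have hf2 : LinearMap.ker (P.mulVecLin ∘ₗ Ac.subtype) = ⊥ := by
    rw [LinearMap.ker_eq_bot']
    intro m hm
    have hmA : (m : Fin n → ℝ) ∈ A := by
      rw [hAdef, LinearMap.mem_ker]
      exact hm
    have : (m : Fin n → ℝ) ∈ A ⊓ Ac := ⟨hmA, m.2⟩
    rw [hAcc.inf_eq_bot] at this
    exact Subtype.ext ((Submodule.mem_bot ℝ).1 this)
  obtain ⟨g1, hg1⟩ := (Q.mulVecLin ∘ₗ Bc.subtype).exists_leftInverse_of_injective hf1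
  obtain ⟨g2, hg2⟩ := (P.mulVecLin ∘ₗ Ac.subtype).exists_leftInverse_of_injective hf2
  set Gq : (Fin p → ℝ) →ₗ[ℝ] (Fin n → ℝ) := Bc.subtype ∘ₗ g1 with hGqdef
  set Gp : (Fin q → ℝ) →ₗ[ℝ] (Fin n → ℝ) := Ac.subtype ∘ₗ g2 with hGpdef
  have hGq : ∀ x y, c (Gq (Q *ᵥ x)) y = c x y := by
    intro x y
    have h1 := Submodule.projection_add_projection_eq_self hBcc x
    set xb : Fin n → ℝ := (Bs.linearProjOfIsCompl Bc hBcc x : Fin n → ℝ) with hxb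
    set m : ↥Bc := Bc.linearProjOfIsCompl Bs hBcc.symm x with hm
    have hx1 : xb + (m : Fin n → ℝ) = x := h1
    have hQx : Q *ᵥ x = (Q.mulVecLin ∘ₗ Bc.subtype) m := by
      have hq0 : Q *ᵥ xb = 0 := (hmemB xb).1 (SetLike.coe_mem _)
      rw [← hx1]
      simp [Matrix.mulVec_add, hq0, Matrix.mulVecLin_apply]
    have hid : g1 ((Q.mulVecLin ∘ₗ Bc.subtype) m) = m := by
      have h := congrArg (fun (f : ↥Bc →ₗ[ℝ] ↥Bc) => f m) hg1
      simpa using h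
    have hGqQ : Gq (Q *ᵥ x) = (m : Fin n → ℝ) := by
      rw [hQx, hGqdef, LinearMap.comp_apply, hid, Submodule.subtype_apply]
    rw [hGqQ]
    have hxm : (m : Fin n → ℝ) = x - xb := by rw [← hx1]; abel
    rw [hxm, map_sub, LinearMap.sub_apply, hc1 xb (SetLike.coe_mem _) y, sub_zero]
  have hGp : ∀ x y, c x (Gp (P *ᵥ y)) = c x y := by
    intro x y
    have h1 := Submodule.projection_add_projection_eq_self hAcc y
    set ya : Fin n → ℝ := (A.linearProjOfIsCompl Ac hAcc y : Fin n → ℝ) with hya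
    set m : ↥Ac := Ac.linearProjOfIsCompl A hAcc.symm y with hm
    have hy1 : ya + (m : Fin n → ℝ) = y := h1
    have hPy : P *ᵥ y = (P.mulVecLin ∘ₗ Ac.subtype) m := by
      have hp0 : P *ᵥ ya = 0 := (hmemA ya).1 (SetLike.coe_mem _)
      rw [← hy1]
      simp [Matrix.mulVec_add, hp0, Matrix.mulVecLin_apply]
    have hid : g2 ((P.mulVecLin ∘ₗ Ac.subtype) m) = m := by
      have h := congrArg (fun (f : ↥Ac →ₗ[ℝ] ↥Ac) => f m) hg2
      simpa using h
    have hGpP : Gp (P *ᵥ y) = (m : Fin n → ℝ) := by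
      rw [hPy, hGpdef, LinearMap.comp_apply, hid, Submodule.subtype_apply]
    rw [hGpP]
    have hym : (m : Fin n → ℝ) = y - ya := by rw [← hy1]; abel
    rw [hym, map_sub, hc2 ya (SetLike.coe_mem _) x, sub_zero]
  set Θb : (Fin p → ℝ) →ₗ[ℝ] (Fin q → ℝ) →ₗ[ℝ] ℝ := c.compl₁₂ Gq Gp with hΘbdef
  refine ⟨LinearMap.toMatrix₂' ℝ Θb, ?_⟩
  intro x hx0
  -- rewrite the quadratic form
  have htheta : ∀ (u : Fin p → ℝ) (w : Fin q → ℝ),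
      u ⬝ᵥ (LinearMap.toMatrix₂' ℝ Θb) *ᵥ w = Θb u w := by
    intro u w
    rw [← Matrix.toLinearMap₂'_apply' (LinearMap.toMatrix₂' ℝ Θb) u w,
      Matrix.toLinearMap₂'_toMatrix' _]
  set Θ := LinearMap.toMatrix₂' ℝ Θb with hΘdef
  have hcross : ∀ z : Fin n → ℝ, (Q *ᵥ z) ⬝ᵥ Θ *ᵥ (P *ᵥ z) = c z z := by
    intro z
    rw [hΘdef, htheta, hΘbdef, LinearMap.compl₁₂_apply, hGq, hGp]
  have hlhs : x ⬝ᵥ ((Pi + Pᵀ * Θᵀ * Q + Qᵀ * Θ * P).mulVec x)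
      = bf Pi x x + 2 * c x x := by
    rw [Matrix.add_mulVec, Matrix.add_mulVec, dotProduct_add, dotProduct_add]
    have e1 : x ⬝ᵥ (Pᵀ * Θᵀ * Q).mulVec x = (Q *ᵥ x) ⬝ᵥ Θ *ᵥ (P *ᵥ x) := by
      rw [← Matrix.mulVec_mulVec, ← Matrix.mulVec_mulVec]
      rw [Matrix.dotProduct_mulVec x Pᵀ, Matrix.vecMul_transpose]
      rw [Matrix.dotProduct_mulVec _ Θᵀ, Matrix.vecMul_transpose]
      rw [dotProduct_comm]
    have e2 : x ⬝ᵥ (Qᵀ * Θ * P).mulVec x = (Q *ᵥ x) ⬝ᵥ Θ *ᵥ (P *ᵥ x) := by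
      rw [← Matrix.mulVec_mulVec, ← Matrix.mulVec_mulVec]
      rw [Matrix.dotProduct_mulVec x Qᵀ, Matrix.vecMul_transpose]
    rw [e1, e2, hcross, bf_apply]
    ring
  rw [hlhs, hkey x]
  -- now the negativity argument
  set vv : Fin n → ℝ := x - (fB x + fD x) + T (fB x + fD x) with hvvdef
  set bT : Fin n → ℝ := fB x - T (fB x) with hbTdef
  have hvvA : vv ∈ A := by
    have hu : x - (fB x + fD x) = gA x := sub_eq_of_eq_add (hdecomp x).symm
    rw [hvvdef, hu]
    exact add_mem (hgAmem x) (hCA (hTmem _))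
  have hbTB : bT ∈ Bs := sub_mem (hB'le (hfBmem x)) (hCB (hTmem _))
  have h3 : -(bf Pi (T (fD x)) (T (fD x)) + (K+1) * (fD x ⬝ᵥ fD x))
      ≤ -(fD x ⬝ᵥ fD x) := by
    have := hKb (fD x)
    nlinarith [this]
  by_cases hd : fD x = 0
  · by_cases hbt : bT = 0
    · have hfb0 : fB x = 0 := by
        have hTC : fB x ∈ C := by
          have : fB x = T (fB x) := by
            have := sub_eq_zero.1 (hbTdef ▸ hbt)
            exact this
          rw [this]; exact hTmem _
        have hmem : fB x ∈ C ⊓ B' := Submodule.mem_inf.2 ⟨hTC, hfBmem x⟩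
        rw [hCB'disj] at hmem
        simpa using hmem
      have hvvx : vv = x := by
        rw [hvvdef, hfb0, hd]
        simp
      have hxA : x ∈ A := hvvx ▸ hvvA
      have hneg : bf Pi x x < 0 := by
        rw [bf_apply]
        exact hP x hx0 ((hmemA x).1 hxA)
      rw [hvvx, hbt, hd]
      simp only [map_zero, dotProduct_zero, mul_zero, add_zero]
      simpa using hneg
    · have hneg : bf Pi bT bT < 0 := by
        rw [bf_apply]
        exact hQ bT hbt ((hmemB bT).1 hbTB)
      have h1 : bf Pi vv vv ≤ 0 := hA0 vv hvvA
      have h2 : bf Pi (T (fD x)) (T (fD x)) + (K+1) * (fD x ⬝ᵥ fD x) = 0 := by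
        rw [hd]
        simp
      linarith
  · have hdd : 0 < fD x ⬝ᵥ fD x := dot_self_pos hd
    have h1 : bf Pi vv vv ≤ 0 := hA0 vv hvvA
    have h2 : bf Pi bT bT ≤ 0 := hB0 bT hbTB
    linarith





lemma expand_form (Pi : Matrix (Fin n) (Fin n) ℝ) (P : Matrix (Fin q) (Fin n) ℝ)
    (Q : Matrix (Fin p) (Fin n) ℝ) (Θ : Matrix (Fin p) (Fin q) ℝ) (x : Fin n → ℝ) :
    x ⬝ᵥ ((Pi + Pᵀ * Θᵀ * Q + Qᵀ * Θ * P).mulVec x)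
      = x ⬝ᵥ Pi *ᵥ x + (P *ᵥ x) ⬝ᵥ (Θᵀ *ᵥ (Q *ᵥ x)) + (Q *ᵥ x) ⬝ᵥ (Θ *ᵥ (P *ᵥ x)) := by
  rw [Matrix.add_mulVec, Matrix.add_mulVec, dotProduct_add, dotProduct_add]
  have e1 : x ⬝ᵥ (Pᵀ * Θᵀ * Q).mulVec x = (P *ᵥ x) ⬝ᵥ (Θᵀ *ᵥ (Q *ᵥ x)) := by
    rw [← Matrix.mulVec_mulVec, ← Matrix.mulVec_mulVec,
      Matrix.dotProduct_mulVec x Pᵀ, Matrix.vecMul_transpose]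
  have e2 : x ⬝ᵥ (Qᵀ * Θ * P).mulVec x = (Q *ᵥ x) ⬝ᵥ (Θ *ᵥ (P *ᵥ x)) := by
    rw [← Matrix.mulVec_mulVec, ← Matrix.mulVec_mulVec,
      Matrix.dotProduct_mulVec x Qᵀ, Matrix.vecMul_transpose]
  rw [e1, e2]

/-- Projection Lemma: there exists `Θ` with `Π + Pᵀ Θᵀ Q + Qᵀ Θ P ≺ 0` iff `Π` is negative
definite on `ker P` and on `ker Q`. (Here `Pi` plays the role of `Π`.) -/
theorem stmt7 (n p q : ℕ) (Pi : Matrix (Fin n) (Fin n) ℝ) (hPi : Pi.IsSymm)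
    (P : Matrix (Fin q) (Fin n) ℝ) (Q : Matrix (Fin p) (Fin n) ℝ) :
    (∃ Θ : Matrix (Fin p) (Fin q) ℝ,
        ∀ x : Fin n → ℝ, x ≠ 0 →
          x ⬝ᵥ ((Pi + Pᵀ * Θᵀ * Q + Qᵀ * Θ * P).mulVec x) < 0) ↔
      ((∀ x : Fin n → ℝ, x ≠ 0 → P.mulVec x = 0 → x ⬝ᵥ (Pi.mulVec x) < 0) ∧
        (∀ x : Fin n → ℝ, x ≠ 0 → Q.mulVec x = 0 → x ⬝ᵥ (Pi.mulVec x) < 0)) := by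
  constructor
  · rintro ⟨Θ, hΘ⟩
    constructor
    · intro x hx hPx
      have h := hΘ x hx
      rw [expand_form, hPx, Matrix.mulVec_zero, dotProduct_zero, zero_dotProduct,
        add_zero, add_zero] at h
      exact h
    · intro x hx hQx
      have h := hΘ x hx
      rw [expand_form, hQx, Matrix.mulVec_zero, dotProduct_zero, zero_dotProduct,
        add_zero, add_zero] at h
      exact h
  · rintro ⟨h1, h2⟩
    exact hard_dir Pi hPi P Q h1 h2

end
end

section
/- For Z ∈ 𝕊^n with 0 ≺ Z ≺ I_n, and any G, G̃ ∈ ℝ^{n×ℓ}, N, Ñ ∈ ℝ^{n×ℓ}: Sy(Gᵀ N) ⪯ Sy(G̃ᵀ N + Gᵀ Ñ − G̃ᵀ Ñ) + (G − G̃)ᵀ Z^{-1} (G − G̃) + (N − Ñ)ᵀ (I_n − Z)^{-1} (N − Ñ), where Sy(X) = X + Xᵀ. Equality holds when G = G̃ and N = Ñ. -/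
open Matrix

private lemma aux_sq {n ℓ : ℕ} (Z W : Matrix (Fin n) (Fin n) ℝ)
    (hZt : Zᵀ = Z) (hWit : (W⁻¹)ᵀ = W⁻¹) (_hZit : (Z⁻¹)ᵀ = Z⁻¹)
    (h1 : ∀ X : Matrix (Fin n) (Fin ℓ) ℝ, W * (W⁻¹ * X) = X)
    (h2 : ∀ X : Matrix (Fin n) (Fin ℓ) ℝ, W⁻¹ * (W * X) = X)
    (h3 : ∀ X : Matrix (Fin n) (Fin ℓ) ℝ, Z * (Z⁻¹ * X) = X)
    (h4 : ∀ X : Matrix (Fin n) (Fin ℓ) ℝ, Z⁻¹ * (Z * X) = X)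
    (hW1 : ∀ X : Matrix (Fin n) (Fin ℓ) ℝ, W * X = X - Z * X)
    (A B : Matrix (Fin n) (Fin ℓ) ℝ) :
    Aᵀ * Z⁻¹ * A + Bᵀ * W⁻¹ * B - (Aᵀ * B + Bᵀ * A)
      = (W⁻¹ * B - A)ᵀ * W * (W⁻¹ * B - A)
        + ((Z - 1) * A)ᵀ * Z⁻¹ * ((Z - 1) * A) + Aᵀ * A := by
  simp only [transpose_sub, transpose_mul, transpose_one, hZt, hWit, _hZit,
    Matrix.sub_mul, Matrix.mul_sub, Matrix.one_mul, Matrix.mul_one,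
    Matrix.mul_assoc, h1, h2, h3, h4]
  simp only [hW1, Matrix.mul_sub]
  abel

/-- psd-convex overestimate of the bilinear form `Sy(GᵀN)`:
`Sy(GᵀN) ⪯ Sy(G̃ᵀN + GᵀÑ − G̃ᵀÑ) + (G−G̃)ᵀZ⁻¹(G−G̃) + (N−Ñ)ᵀ(I−Z)⁻¹(N−Ñ)`, with equality
when `G = G̃` and `N = Ñ`. -/
theorem stmt11 (n ℓ : ℕ) (Z : Matrix (Fin n) (Fin n) ℝ)
    (hZ : Z.PosDef) (hZI : ((1 : Matrix (Fin n) (Fin n) ℝ) - Z).PosDef)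
    (G G' N N' : Matrix (Fin n) (Fin ℓ) ℝ) :
    (((G'ᵀ * N + Gᵀ * N' - G'ᵀ * N') + (G'ᵀ * N + Gᵀ * N' - G'ᵀ * N')ᵀ
        + (G - G')ᵀ * Z⁻¹ * (G - G')
        + (N - N')ᵀ * ((1 : Matrix (Fin n) (Fin n) ℝ) - Z)⁻¹ * (N - N'))
      - (Gᵀ * N + (Gᵀ * N)ᵀ)).PosSemidef ∧
    (G = G' → N = N' →
      (G'ᵀ * N + Gᵀ * N' - G'ᵀ * N') + (G'ᵀ * N + Gᵀ * N' - G'ᵀ * N')ᵀ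
          + (G - G')ᵀ * Z⁻¹ * (G - G')
          + (N - N')ᵀ * ((1 : Matrix (Fin n) (Fin n) ℝ) - Z)⁻¹ * (N - N')
        = Gᵀ * N + (Gᵀ * N)ᵀ) := by
  constructor
  · set W : Matrix (Fin n) (Fin n) ℝ := (1 : Matrix (Fin n) (Fin n) ℝ) - Z with hW
    have hdZ : IsUnit Z.det := (Matrix.isUnit_iff_isUnit_det Z).1 hZ.isUnit
    have hdW : IsUnit W.det := (Matrix.isUnit_iff_isUnit_det W).1 hZI.isUnit
    have hZt : Zᵀ = Z := by rw [← Matrix.conjTranspose_eq_transpose_of_trivial]; exact hZ.1.eq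
    have hWt : Wᵀ = W := by rw [← Matrix.conjTranspose_eq_transpose_of_trivial]; exact hZI.1.eq
    have hZit : (Z⁻¹)ᵀ = Z⁻¹ := by rw [transpose_nonsing_inv, hZt]
    have hWit : (W⁻¹)ᵀ = W⁻¹ := by rw [transpose_nonsing_inv, hWt]
    have h1 : ∀ X : Matrix (Fin n) (Fin ℓ) ℝ, W * (W⁻¹ * X) = X := fun X =>
      Matrix.mul_nonsing_inv_cancel_left W X hdW
    have h2 : ∀ X : Matrix (Fin n) (Fin ℓ) ℝ, W⁻¹ * (W * X) = X := fun X =>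
      Matrix.nonsing_inv_mul_cancel_left W X hdW
    have h3 : ∀ X : Matrix (Fin n) (Fin ℓ) ℝ, Z * (Z⁻¹ * X) = X := fun X =>
      Matrix.mul_nonsing_inv_cancel_left Z X hdZ
    have h4 : ∀ X : Matrix (Fin n) (Fin ℓ) ℝ, Z⁻¹ * (Z * X) = X := fun X =>
      Matrix.nonsing_inv_mul_cancel_left Z X hdZ
    have hW1 : ∀ X : Matrix (Fin n) (Fin ℓ) ℝ, W * X = X - Z * X := fun X => by
      rw [hW, Matrix.sub_mul, Matrix.one_mul]
    set A := G - G' with hA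
    set B := N - N' with hB
    have step1 : ((G'ᵀ * N + Gᵀ * N' - G'ᵀ * N') + (G'ᵀ * N + Gᵀ * N' - G'ᵀ * N')ᵀ
        + Aᵀ * Z⁻¹ * A + Bᵀ * W⁻¹ * B) - (Gᵀ * N + (Gᵀ * N)ᵀ)
        = Aᵀ * Z⁻¹ * A + Bᵀ * W⁻¹ * B - (Aᵀ * B + Bᵀ * A) := by
      simp only [hA, hB, transpose_sub, transpose_add, transpose_mul, transpose_transpose,
        Matrix.sub_mul, Matrix.mul_sub]
      abel
    rw [step1, aux_sq Z W hZt hWit hZit h1 h2 h3 h4 hW1 A B]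
    have hct : ∀ (M : Matrix (Fin n) (Fin ℓ) ℝ), Mᵀ = Mᴴ := fun M =>
      (Matrix.conjTranspose_eq_transpose_of_trivial M).symm
    rw [hct, hct, hct]
    have p1 : ((W⁻¹ * B - A)ᴴ * W * (W⁻¹ * B - A)).PosSemidef :=
      hZI.posSemidef.conjTranspose_mul_mul_same (W⁻¹ * B - A)
    have p2 : (((Z - 1) * A)ᴴ * Z⁻¹ * ((Z - 1) * A)).PosSemidef :=
      hZ.inv.posSemidef.conjTranspose_mul_mul_same ((Z - 1) * A)
    have p3 : (Aᴴ * A).PosSemidef := Matrix.posSemidef_conjTranspose_mul_self A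
    exact (p1.add p2).add p3
  · rintro rfl rfl
    simp
end

section
/- Let f_i : I_i → ℝ^{d_i} be square-integrable functions on disjoint intervals I_i = [−r_i, −r_{i−1}], i = 1,…,ν, each with Gram matrix 𝔉_i = ∫_{I_i} f_i f_iᵀ dτ positive definite, let Q_i ∈ 𝕊^n be positive semidefinite, and let e : [−r_ν, 0] → ℝ^n be square-integrable. Then Σ_{i=1}^ν ∫_{I_i} e(τ)ᵀ Q_i e(τ) dτ ≥ ξᵀ diag(I_{d_1} ⊗ Q_1, …, I_{d_ν} ⊗ Q_ν) ξ, where ξ is the stacked vector with blocks ξ_i = ∫_{I_i} (√(𝔉_i^{-1}) f_i(τ) ⊗ I_n) e(τ) dτ. -/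
open Matrix MeasureTheory
open scoped Kronecker

section OldSqrt
open scoped ComplexOrder

/-- The square root of a positive semidefinite matrix, as Mathlib defined it in Dec 2024. -/
noncomputable def Matrix.PosSemidef.sqrt {n 𝕜 : Type*} [Fintype n] [DecidableEq n] [RCLike 𝕜]
    {A : Matrix n n 𝕜} (hA : A.PosSemidef) : Matrix n n 𝕜 :=
  hA.1.eigenvectorUnitary.1 * diagonal ((↑) ∘ (√·) ∘ hA.1.eigenvalues) *
    (star hA.1.eigenvectorUnitary : Matrix n n 𝕜)

end OldSqrt

lemma Matrix.PosSemidef.posSemidef_sqrt {n : Type*} [Fintype n] [DecidableEq n]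
    {A : Matrix n n ℝ} (hA : A.PosSemidef) : hA.sqrt.PosSemidef := by
  unfold Matrix.PosSemidef.sqrt
  have hd : (diagonal ((↑) ∘ (√·) ∘ hA.1.eigenvalues) : Matrix n n ℝ).PosSemidef :=
    posSemidef_diagonal_iff.mpr fun i => by simp [Real.sqrt_nonneg]
  have := hd.mul_mul_conjTranspose_same (hA.1.eigenvectorUnitary : Matrix n n ℝ)
  exact this

lemma Matrix.PosSemidef.sqrt_mul_self {n : Type*} [Fintype n] [DecidableEq n]
    {A : Matrix n n ℝ} (hA : A.PosSemidef) : hA.sqrt * hA.sqrt = A := by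
  unfold Matrix.PosSemidef.sqrt
  set C : Matrix n n ℝ := hA.1.eigenvectorUnitary.1
  set E : Matrix n n ℝ := diagonal ((↑) ∘ (√·) ∘ hA.1.eigenvalues)
  have hCC : star C * C = 1 := by simp [C]
  have hE : E * E = diagonal (RCLike.ofReal ∘ hA.1.eigenvalues) := by
    simp only [E, diagonal_mul_diagonal]
    congr 1; funext i
    simp [Real.mul_self_sqrt (hA.eigenvalues_nonneg i)]
  calc C * E * star C * (C * E * star C) = C * (E * (star C * C) * E) * star C := by
        simp only [Matrix.mul_assoc]
    _ = A := by
        rw [hCC, Matrix.mul_one, hE]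
        conv_rhs => rw [hA.1.spectral_theorem, Unitary.conjStarAlgAut_apply]

open MeasureTheory
open scoped ENNReal

lemma intMul {α : Type*} [MeasurableSpace α] {μ : Measure α} {f g : α → ℝ}
    (hf : MemLp f 2 μ) (hg : MemLp g 2 μ) : Integrable (fun x => f x * g x) μ := by
  rw [← memLp_one_iff_integrable]
  have h : (1:ℝ≥0∞)/1 = 1/2 + 1/2 := by
    rw [ENNReal.div_add_div_same, one_add_one_eq_two,
      ENNReal.div_self two_ne_zero ENNReal.ofNat_ne_top, one_div_one]
  have := hg.smul (𝕜 := ℝ) (r := 1) hf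
  exact this

lemma bessel {α ι : Type*} [Fintype ι] [DecidableEq ι] [MeasurableSpace α] {μ : Measure α}
    (g : ι → α → ℝ) (hg : ∀ j, MemLp (g j) 2 μ)
    (horth : ∀ j k, ∫ x, g j x * g k x ∂μ = if j = k then 1 else 0)
    (h : α → ℝ) (hh : MemLp h 2 μ) :
    ∑ j, (∫ x, g j x * h x ∂μ) ^ 2 ≤ ∫ x, h x ^ 2 ∂μ := by
  set b : ι → ℝ := fun j => ∫ x, g j x * h x ∂μ with hb
  have hgh : ∀ j, Integrable (fun x => g j x * h x) μ := fun j => intMul (hg j) hh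
  have hgg : ∀ j k, Integrable (fun x => g j x * g k x) μ := fun j k => intMul (hg j) (hg k)
  have hh2 : Integrable (fun x => h x ^ 2) μ := hh.integrable_sq
  have expand : ∀ x, (h x - ∑ j, b j * g j x) ^ 2
      = (h x ^ 2 - 2 * ∑ j, b j * (g j x * h x))
        + ∑ j, ∑ k, (b j * b k) * (g j x * g k x) := by
    intro x
    have hs : (∑ j, b j * g j x) ^ 2 = ∑ j, ∑ k, (b j * b k) * (g j x * g k x) := by
      rw [sq, Finset.sum_mul_sum]
      exact Finset.sum_congr rfl fun j _ => Finset.sum_congr rfl fun k _ => by ring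
    rw [sub_sq, hs, Finset.mul_sum, Finset.mul_sum]
    congr 1
    congr 1
    exact Finset.sum_congr rfl fun j _ => by ring
  have i1 : Integrable (fun x => 2 * ∑ j, b j * (g j x * h x)) μ :=
    ((integrable_finset_sum _ fun j _ => (hgh j).const_mul (b j)).const_mul 2)
  have i2 : Integrable (fun x => ∑ j, ∑ k, (b j * b k) * (g j x * g k x)) μ :=
    integrable_finset_sum _ fun j _ =>
      integrable_finset_sum _ fun k _ => (hgg j k).const_mul _
  have key : (0:ℝ) ≤ ∫ x, (h x - ∑ j, b j * g j x) ^ 2 ∂μ :=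
    integral_nonneg fun x => sq_nonneg _
  have e1 : ∫ x, (h x - ∑ j, b j * g j x) ^ 2 ∂μ
      = (∫ x, h x ^ 2 ∂μ) - ∑ j, b j ^ 2 := by
    calc ∫ x, (h x - ∑ j, b j * g j x) ^ 2 ∂μ
        = ∫ x, ((h x ^ 2 - 2 * ∑ j, b j * (g j x * h x))
            + ∑ j, ∑ k, (b j * b k) * (g j x * g k x)) ∂μ := by
          exact integral_congr_ae (Filter.Eventually.of_forall expand)
      _ = (∫ x, (h x ^ 2 - 2 * ∑ j, b j * (g j x * h x)) ∂μ)
            + ∫ x, ∑ j, ∑ k, (b j * b k) * (g j x * g k x) ∂μ :=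
          integral_add (hh2.sub i1) i2
      _ = ((∫ x, h x ^ 2 ∂μ) - ∫ x, 2 * ∑ j, b j * (g j x * h x) ∂μ)
            + ∫ x, ∑ j, ∑ k, (b j * b k) * (g j x * g k x) ∂μ := by
          rw [integral_sub hh2 i1]
      _ = (∫ x, h x ^ 2 ∂μ) - ∑ j, b j ^ 2 := by
          rw [integral_const_mul, integral_finset_sum _ fun j _ => (hgh j).const_mul (b j),
            integral_finset_sum _ fun j _ =>
              integrable_finset_sum _ fun k _ => (hgg j k).const_mul _]
          have t1 : ∀ j : ι, ∫ x, b j * (g j x * h x) ∂μ = b j ^ 2 := fun j => by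
            rw [integral_const_mul]; exact (pow_two (b j)).symm
          have t2 : ∀ j : ι, ∫ x, ∑ k, (b j * b k) * (g j x * g k x) ∂μ = b j ^ 2 := fun j => by
            rw [integral_finset_sum _ fun k _ => (hgg j k).const_mul _]
            have : ∀ k : ι, ∫ x, (b j * b k) * (g j x * g k x) ∂μ
                = (b j * b k) * (if j = k then 1 else 0) := fun k => by
              rw [integral_const_mul, horth]
            simp_rw [this, mul_ite, mul_one, mul_zero, Finset.sum_ite_eq, Finset.mem_univ,
              if_pos]
            ring
          simp_rw [t1, t2]
          ring
  rw [e1] at key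
  linarith


open Matrix

lemma besselQuad {α ι κ : Type*} [Fintype ι] [DecidableEq ι] [Fintype κ] [DecidableEq κ]
    [MeasurableSpace α] {μ : Measure α}
    (g : ι → α → ℝ) (hg : ∀ j, MemLp (g j) 2 μ)
    (horth : ∀ j k, ∫ x, g j x * g k x ∂μ = if j = k then 1 else 0)
    (Q : Matrix κ κ ℝ) (hQ : Q.PosSemidef)
    (e : α → κ → ℝ) (he : ∀ k, MemLp (fun x => e x k) 2 μ)
    (v : ι → κ → ℝ) (hv : ∀ j k, v j k = ∫ x, g j x * e x k ∂μ) :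
    ∑ j, (v j) ⬝ᵥ Q.mulVec (v j) ≤ ∫ x, (e x) ⬝ᵥ Q.mulVec (e x) ∂μ := by
  set C := hQ.sqrt with hC
  have hC2 : C * C = Q := hQ.sqrt_mul_self
  have hCsymm : ∀ a b, C a b = C b a := fun a b => by simpa using hQ.posSemidef_sqrt.1.apply b a
  -- quadratic form as sum of squares
  have quad : ∀ w : κ → ℝ, w ⬝ᵥ Q.mulVec w = ∑ m, (C.mulVec w m) ^ 2 := by
    intro w
    rw [← hC2, ← Matrix.mulVec_mulVec, dotProduct_mulVec]
    have hv : Matrix.vecMul w C = C.mulVec w := by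
      ext m
      simp only [Matrix.vecMul, Matrix.mulVec, dotProduct]
      exact Finset.sum_congr rfl fun k _ => by rw [hCsymm m k]; ring
    rw [hv]
    simp [dotProduct, sq]
  -- the combined functions
  set h : κ → α → ℝ := fun m x => ∑ k, C m k * e x k with hh
  have hhm : ∀ m, MemLp (h m) 2 μ := fun m =>
    memLp_finset_sum _ fun k _ => (he k).const_mul _
  have hint : ∀ j m, ∫ x, g j x * h m x ∂μ = C.mulVec (v j) m := by
    intro j m
    have : ∀ x, g j x * h m x = ∑ k, C m k * (g j x * e x k) := fun x => by
      rw [hh]; simp only [Finset.mul_sum]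
      exact Finset.sum_congr rfl fun k _ => by ring
    rw [integral_congr_ae (Filter.Eventually.of_forall this),
      integral_finset_sum _ fun k _ => (intMul (hg j) (he k)).const_mul _]
    simp only [Matrix.mulVec, dotProduct]
    exact Finset.sum_congr rfl fun k _ => by rw [integral_const_mul, hv]
  have hRHS : ∫ x, (e x) ⬝ᵥ Q.mulVec (e x) ∂μ = ∑ m, ∫ x, h m x ^ 2 ∂μ := by
    rw [← integral_finset_sum _ fun m _ => (hhm m).integrable_sq]
    exact integral_congr_ae (Filter.Eventually.of_forall fun x => quad (e x))
  rw [hRHS]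
  calc ∑ j, (v j) ⬝ᵥ Q.mulVec (v j) = ∑ j, ∑ m, (∫ x, g j x * h m x ∂μ) ^ 2 := by
        refine Finset.sum_congr rfl fun j _ => ?_
        rw [quad (v j)]
        exact Finset.sum_congr rfl fun m _ => by rw [hint j m]
    _ = ∑ m, ∑ j, (∫ x, g j x * h m x ∂μ) ^ 2 := Finset.sum_comm
    _ ≤ ∑ m, ∫ x, h m x ^ 2 ∂μ :=
        Finset.sum_le_sum fun m _ => bessel g hg horth (h m) (hhm m)

/-- Summed Bessel-type inequality over subintervals `I_i = [−r_i, −r_{i−1}]`: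
`Σᵢ ∫_{I_i} eᵀ Qᵢ e ≥ ξᵀ diag(I_{dᵢ} ⊗ Qᵢ) ξ` where
`ξᵢ = ∫_{I_i} (√(𝔉ᵢ⁻¹) fᵢ(τ) ⊗ I_n) e(τ) dτ`. -/
theorem stmt14 (ν n : ℕ) (d : Fin ν → ℕ) (r : Fin (ν + 1) → ℝ)
    (hr0 : r 0 = 0) (hmono : StrictMono r)
    (f : ∀ i : Fin ν, ℝ → Fin (d i) → ℝ)
    (hf : ∀ i j, MemLp (fun τ => f i τ j) 2
      (volume.restrict (Set.Icc (-(r i.succ)) (-(r i.castSucc)))))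
    (F : ∀ i, Matrix (Fin (d i)) (Fin (d i)) ℝ)
    (hFdef : ∀ i, F i = Matrix.of fun j k =>
      ∫ τ in Set.Icc (-(r i.succ)) (-(r i.castSucc)), f i τ j * f i τ k)
    (hF : ∀ i, (F i).PosDef)
    (Q : Fin ν → Matrix (Fin n) (Fin n) ℝ) (hQ : ∀ i, (Q i).PosSemidef)
    (e : ℝ → Fin n → ℝ)
    (he : ∀ (i : Fin ν) (k : Fin n), MemLp (fun τ => e τ k) 2
      (volume.restrict (Set.Icc (-(r i.succ)) (-(r i.castSucc)))))
    (ξ : (Σ i : Fin ν, Fin (d i) × Fin n) → ℝ)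
    (hξ : ∀ i j k, ξ ⟨i, (j, k)⟩ =
      ∫ τ in Set.Icc (-(r i.succ)) (-(r i.castSucc)),
        (∑ j', ((hF i).inv.posSemidef.sqrt) j j' * f i τ j') * e τ k) :
    (∑ i, ∫ τ in Set.Icc (-(r i.succ)) (-(r i.castSucc)), (e τ) ⬝ᵥ ((Q i).mulVec (e τ)))
      ≥ ξ ⬝ᵥ ((Matrix.blockDiagonal'
          (fun i => (1 : Matrix (Fin (d i)) (Fin (d i)) ℝ) ⊗ₖ Q i)).mulVec ξ) := by
  have hmv : ∀ (i : Fin ν) (a : Fin (d i) × Fin n),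
      (Matrix.blockDiagonal'
        (fun i => (1 : Matrix (Fin (d i)) (Fin (d i)) ℝ) ⊗ₖ Q i)).mulVec ξ ⟨i, a⟩
      = ∑ b : Fin (d i) × Fin n,
          ((1 : Matrix (Fin (d i)) (Fin (d i)) ℝ) ⊗ₖ Q i) a b * ξ ⟨i, b⟩ := by
    intro i a
    rw [Matrix.mulVec, dotProduct, ← Finset.univ_sigma_univ, Finset.sum_sigma]
    rw [Finset.sum_eq_single_of_mem i (Finset.mem_univ i)
      (fun i' _ hne => Finset.sum_eq_zero fun b _ => by
        rw [Matrix.blockDiagonal'_apply_ne _ _ _ (Ne.symm hne), zero_mul])]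
    exact Finset.sum_congr rfl fun b _ => by rw [Matrix.blockDiagonal'_apply_eq]
  have hRHS : ξ ⬝ᵥ ((Matrix.blockDiagonal'
        (fun i => (1 : Matrix (Fin (d i)) (Fin (d i)) ℝ) ⊗ₖ Q i)).mulVec ξ)
      = ∑ i, ∑ j, (fun k => ξ ⟨i, (j, k)⟩) ⬝ᵥ (Q i).mulVec (fun k => ξ ⟨i, (j, k)⟩) := by
    have hdot : ∀ (u w : Fin n → ℝ) (i : Fin ν),
        u ⬝ᵥ (Q i).mulVec w = ∑ k, u k * ∑ k', Q i k k' * w k' := fun u w i => rfl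
    simp only [hdot]
    rw [dotProduct, ← Finset.univ_sigma_univ, Finset.sum_sigma]
    refine Finset.sum_congr rfl fun i _ => ?_
    rw [Fintype.sum_prod_type]
    refine Finset.sum_congr rfl fun j _ => Finset.sum_congr rfl fun k _ => ?_
    rw [hmv i (j, k)]
    congr 1
    rw [Fintype.sum_prod_type]
    rw [Finset.sum_eq_single_of_mem j (Finset.mem_univ j)
      (fun j' _ hne => Finset.sum_eq_zero fun k' _ => by
        simp [Matrix.one_apply, Ne.symm hne])]
    exact Finset.sum_congr rfl fun k' _ => by
      simp [Matrix.one_apply]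
  rw [ge_iff_le, hRHS]
  refine Finset.sum_le_sum fun i _ => ?_
  -- per-interval Bessel
  set S := (hF i).inv.posSemidef.sqrt with hSdef
  have hherm : ∀ a b, S a b = S b a := fun a b => by
    simpa using (hF i).inv.posSemidef.posSemidef_sqrt.1.apply b a
  set g : Fin (d i) → ℝ → ℝ := fun j τ => ∑ j', S j j' * f i τ j' with hgdef
  have hg : ∀ j, MemLp (g j) 2
      (volume.restrict (Set.Icc (-(r i.succ)) (-(r i.castSucc)))) := fun j =>
    memLp_finset_sum _ fun j' _ => (hf i j').const_mul _
  have horth : ∀ j k, (∫ τ in Set.Icc (-(r i.succ)) (-(r i.castSucc)), g j τ * g k τ)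
      = if j = k then 1 else 0 := by
    intro j k
    have h1 : ∀ τ, g j τ * g k τ
        = ∑ j', ∑ k', (S j j' * S k k') * (f i τ j' * f i τ k') := fun τ => by
      rw [hgdef]
      simp only [Finset.sum_mul_sum]
      exact Finset.sum_congr rfl fun j' _ => Finset.sum_congr rfl fun k' _ => by ring
    rw [integral_congr_ae (Filter.Eventually.of_forall h1),
      integral_finset_sum _ fun j' _ => integrable_finset_sum _ fun k' _ =>
        (intMul (hf i j') (hf i k')).const_mul _]
    have h2 : ∀ j', (∫ τ in Set.Icc (-(r i.succ)) (-(r i.castSucc)),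
          ∑ k', (S j j' * S k k') * (f i τ j' * f i τ k'))
        = ∑ k', (S j j' * S k k') * F i j' k' := fun j' => by
      rw [integral_finset_sum _ fun k' _ => (intMul (hf i j') (hf i k')).const_mul _]
      exact Finset.sum_congr rfl fun k' _ => by rw [integral_const_mul, hFdef i]; rfl
    simp_rw [h2]
    have hSFS : ∑ j', ∑ k', (S j j' * S k k') * F i j' k' = (S * F i * S) j k := by
      rw [Finset.sum_comm, Matrix.mul_apply]
      refine Finset.sum_congr rfl fun k' _ => ?_
      rw [Matrix.mul_apply, Finset.sum_mul]
      refine Finset.sum_congr rfl fun j' _ => ?_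
      rw [hherm k k']
      ring
    have hSS : S * S = (F i)⁻¹ := (hF i).inv.posSemidef.sqrt_mul_self
    have hFdet : IsUnit (F i).det := (hF i).det_pos.ne'.isUnit
    have h1' : ((F i)⁻¹).det * (F i).det = 1 := Matrix.det_nonsing_inv_mul_det _ hFdet
    have h2' : ((F i)⁻¹).det ≠ 0 := fun h => by simp [h] at h1'
    have hSdet' : IsUnit S.det := by
      rw [isUnit_iff_ne_zero]
      intro h0
      exact h2' (by rw [← hSS, Matrix.det_mul, h0, mul_zero])
    have hunit : S * F i * S = 1 := by
      have hF' : F i = (S * S)⁻¹ := by rw [hSS, Matrix.nonsing_inv_nonsing_inv _ hFdet]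
      rw [hF', Matrix.mul_inv_rev,
        show S * (S⁻¹ * S⁻¹) * S = (S * S⁻¹) * (S⁻¹ * S) by noncomm_ring,
        Matrix.mul_nonsing_inv _ hSdet', Matrix.nonsing_inv_mul _ hSdet', one_mul]
    rw [hSFS, hunit, Matrix.one_apply]
  exact besselQuad g hg horth (Q i) (hQ i) e (he i)
    (fun j k => ξ ⟨i, (j, k)⟩) (fun j k => hξ i j k)
end
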